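/- arXiv:1902.01253 — 5 statements merged into one kernel-verified Lean document; each statement's English description precedes it below -/
import Mathlib

section
/- Strong duality for conic programs: let E, F be finite-dimensional real inner product spaces, K ⊆ E a proper convex cone, A : E → F linear, c ∈ E, b ∈ F. Suppose there exists a strictly feasible primal point (x in the interior of K with Ax = b) and a strictly feasible dual point (y ∈ F with A†y − c in the interior of K*). Then p* = d*, and moreover both the primal conic program and the dual conic program possess optimal solutions: there exist a feasible x with ⟨c,x⟩ = p* and a feasible y with ⟨b,y⟩ = d*. -/
open RealInnerProductSpace

set_option maxHeartbeats 1000000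

/-- The dual cone of a set `K` in a real inner product space. -/
def dualCone {E : Type*} [NormedAddCommGroup E] [InnerProductSpace ℝ E] (K : Set E) : Set E :=
  {y : E | ∀ x ∈ K, 0 ≤ ⟪x, y⟫}

/-- **Strong duality for conic programs.** If both the primal and the dual conic program have
strictly feasible solutions, then the primal and dual optimal values coincide and both programs
possess optimal solutions: there is a common value `v` which is the supremum of the primal
objective values, the infimum of the dual objective values, and which is attained by a primal
feasible point and by a dual feasible point. -/
theorem conic_strong_duality
    {E F : Type*} [NormedAddCommGroup E] [InnerProductSpace ℝ E] [FiniteDimensional ℝ E]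
    [NormedAddCommGroup F] [InnerProductSpace ℝ F] [FiniteDimensional ℝ F]
    (K : Set E)
    (hKcone : ∀ x ∈ K, ∀ y ∈ K, ∀ a b : ℝ, 0 ≤ a → 0 ≤ b → a • x + b • y ∈ K)
    (hKclosed : IsClosed K)
    (hKpointed : K ∩ (-K) = {0})
    (hKfull : (interior K).Nonempty)
    (A : E →ₗ[ℝ] F) (c : E) (b : F)
    (hprimal : ∃ x : E, x ∈ interior K ∧ A x = b)
    (hdual : ∃ y : F, (LinearMap.adjoint A) y - c ∈ interior (dualCone K)) :
    ∃ v : ℝ,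
      IsLUB {r : ℝ | ∃ x : E, x ∈ K ∧ A x = b ∧ r = ⟪c, x⟫} v ∧
      IsGLB {r : ℝ | ∃ y : F, (LinearMap.adjoint A) y - c ∈ dualCone K ∧ r = ⟪b, y⟫} v ∧
      (∃ x : E, x ∈ K ∧ A x = b ∧ ⟪c, x⟫ = v) ∧
      (∃ y : F, (LinearMap.adjoint A) y - c ∈ dualCone K ∧ ⟪b, y⟫ = v) := by
  obtain ⟨xh, hxhK, hxhA⟩ := hprimal
  obtain ⟨yh, hyh⟩ := hdual
  have hxhK' : xh ∈ K := interior_subset hxhK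
  have hKconv : Convex ℝ K := fun x hx y hy a b' ha hb hab => hKcone x hx y hy a b' ha hb
  have h0K : (0:E) ∈ K := by simpa using hKcone xh hxhK' xh hxhK' 0 0 le_rfl le_rfl
  -- weak duality
  have hweak : ∀ x ∈ K, A x = b → ∀ y : F, (LinearMap.adjoint A) y - c ∈ dualCone K →
      ⟪c, x⟫ ≤ ⟪b, y⟫ := by
    intro x hx hAx y hy
    have h0 := hy x hx
    rw [inner_sub_right, LinearMap.adjoint_inner_right, hAx] at h0
    linarith [real_inner_comm x c]
  -- epsilon bound from dual strict feasibility
  have heps : ∃ ε > 0, ∀ x ∈ K, ε * ‖x‖ ≤ ⟪x, LinearMap.adjoint A yh - c⟫ := by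
    obtain ⟨ε, hε, hball⟩ := Metric.isOpen_iff.1 isOpen_interior _ hyh
    refine ⟨ε/2, by positivity, fun x hx => ?_⟩
    rcases eq_or_ne x 0 with rfl | hx0
    · simp
    have hxn : (0:ℝ) < ‖x‖ := norm_pos_iff.2 hx0
    have hmem : LinearMap.adjoint A yh - c - (ε/2) • (‖x‖⁻¹ • x) ∈ dualCone K := by
      apply interior_subset
      apply hball
      rw [Metric.mem_ball, dist_eq_norm]
      have : ‖LinearMap.adjoint A yh - c - (ε/2) • (‖x‖⁻¹ • x) - (LinearMap.adjoint A yh - c)‖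
          = ε/2 := by
        rw [sub_sub_cancel_left, norm_neg, norm_smul, norm_smul]
        simp [abs_of_pos hε, abs_of_nonneg (le_of_lt hε), norm_inv, norm_norm,
          inv_mul_cancel₀ hxn.ne', abs_of_nonneg (by positivity : (0:ℝ) ≤ ε/2)]
      rw [this]; linarith
    have h0 := hmem x hx
    rw [inner_sub_right, real_inner_smul_right, real_inner_smul_right,
      real_inner_self_eq_norm_sq] at h0
    have h2 : ‖x‖⁻¹ * ‖x‖^2 = ‖x‖ := by field_simp [pow_two]
    rw [h2] at h0
    linarith
  obtain ⟨ε, hε, hepsK⟩ := heps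
  -- primal attainment
  have hbound : ∀ x ∈ K, A x = b → ε * ‖x‖ ≤ ⟪b, yh⟫ - ⟪c, x⟫ := by
    intro x hx hAx
    have h := hepsK x hx
    rw [inner_sub_right, LinearMap.adjoint_inner_right, hAx] at h
    linarith [real_inner_comm x c]
  set P1 : Set E := (K ∩ {x | A x = b}) ∩ {x | ⟪c, xh⟫ ≤ ⟪c, x⟫} with hP1def
  have hcont : Continuous fun x : E => ⟪c, x⟫ := Continuous.inner continuous_const continuous_id
  have hP1c : IsClosed P1 := by
    have h1 : IsClosed {x : E | A x = b} :=
      isClosed_eq A.continuous_of_finiteDimensional continuous_const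
    have h2 : IsClosed {x : E | ⟪c, xh⟫ ≤ ⟪c, x⟫} := isClosed_le continuous_const hcont
    exact (hKclosed.inter h1).inter h2
  have hP1b : Bornology.IsBounded P1 := by
    rw [isBounded_iff_forall_norm_le]
    refine ⟨(⟪b, yh⟫ - ⟪c, xh⟫) / ε, ?_⟩
    rintro x ⟨⟨hxK, hAx⟩, hge⟩
    have h := hbound x hxK hAx
    rw [le_div_iff₀ hε]
    calc ‖x‖ * ε = ε * ‖x‖ := by ring
      _ ≤ ⟪b, yh⟫ - ⟪c, x⟫ := h
      _ ≤ ⟪b, yh⟫ - ⟪c, xh⟫ := by simp only [Set.mem_setOf_eq] at hge; linarith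
  have hxhmem : xh ∈ P1 := by refine ⟨⟨hxhK', hxhA⟩, ?_⟩; simp
  have hP1ne : P1.Nonempty := ⟨xh, hxhmem⟩
  obtain ⟨xs, hxsP1, hxsmax⟩ :=
    (Metric.isCompact_of_isClosed_isBounded hP1c hP1b).exists_isMaxOn hP1ne hcont.continuousOn
  obtain ⟨⟨hxsK, hxsA⟩, hxsge⟩ := hxsP1
  set p := ⟪c, xs⟫ with hpdef
  have hub : ∀ x ∈ K, A x = b → ⟪c, x⟫ ≤ p := by
    intro x hx hAx
    rcases le_or_gt ⟪c, x⟫ ⟪c, xh⟫ with h | h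
    · exact h.trans (hxsmax hxhmem)
    · exact hxsmax ⟨⟨hx, hAx⟩, h.le⟩
  clear hxsge
  -- restricted surjective map onto the range of A
  set W := LinearMap.range A with hWdef
  set Ah : E →ₗ[ℝ] W := A.rangeRestrict with hAhdef
  set Ac : E →L[ℝ] W := LinearMap.toContinuousLinearMap Ah with hAcdef
  have hAc_apply : ∀ x, Ac x = Ah x := fun x => rfl
  have hAh_coe : ∀ x, (Ah x : F) = A x := fun x => rfl
  have hAsurj : Function.Surjective Ac := by
    rintro ⟨w, x, hx⟩
    exact ⟨x, Subtype.ext (by simp [hAc_apply, hAh_coe, hx])⟩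
  set bh : W := ⟨b, ⟨xh, hxhA⟩⟩ with hbhdef
  have hAhxh : Ah xh = bh := Subtype.ext (by simp [hAh_coe, hxhA]; rfl)
  set G : Set (W × ℝ) := {z | ∃ x ∈ K, ∃ s : ℝ, 0 ≤ s ∧ z = (Ah x - bh, ⟪c, x⟫ - p - s)}
    with hGdef
  -- convexity of G
  have hGconv : Convex ℝ G := by
    rintro z1 ⟨x1, hx1, s1, hs1, rfl⟩ z2 ⟨x2, hx2, s2, hs2, rfl⟩ a a' ha ha' haa
    refine ⟨a • x1 + a' • x2, hKcone _ hx1 _ hx2 a a' ha ha', a*s1 + a'*s2, by positivity, ?_⟩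
    have ha2 : a' = 1 - a := by linarith
    subst ha2
    simp only [Prod.smul_mk, Prod.mk_add_mk, smul_eq_mul, Prod.mk.injEq]
    constructor
    · rw [map_add, map_smul, map_smul]
      module
    · rw [inner_add_right, real_inner_smul_right, real_inner_smul_right]
      ring
  -- interior of G is nonempty
  haveI : CompleteSpace W := FiniteDimensional.complete ℝ W
  have hAopen : IsOpenMap Ac := Ac.isOpenMap hAsurj
  set m : ℝ := ⟪c, xh⟫ - ‖c‖ - p - 1 with hmdef
  set U : Set W := Ac '' (interior K ∩ Metric.ball xh 1) with hUdef
  have hUopen : IsOpen U := hAopen _ (isOpen_interior.inter Metric.isOpen_ball)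
  set S : Set (W × ℝ) := ((· + bh) ⁻¹' U) ×ˢ Set.Iio m with hSdef
  have hSopen : IsOpen S :=
    (hUopen.preimage (continuous_id.add continuous_const)).prod isOpen_Iio
  have hSsubG : S ⊆ G := by
    rintro ⟨w, t⟩ ⟨hw, ht⟩
    simp only [Set.mem_preimage, hUdef, Set.mem_image] at hw
    obtain ⟨x, ⟨hxi, hxb⟩, hxw⟩ := hw
    simp only [Set.mem_Iio] at ht
    refine ⟨x, interior_subset hxi, ⟪c, x⟫ - p - t, ?_, ?_⟩
    · have hxb' : ‖xh - x‖ < 1 := by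
        rw [Metric.mem_ball, dist_eq_norm] at hxb
        rwa [norm_sub_rev]
      have hcs : ⟪c, xh - x⟫ ≤ ‖c‖ * ‖xh - x‖ := real_inner_le_norm c (xh - x)
      have hcs2 : ‖c‖ * ‖xh - x‖ ≤ ‖c‖ := by
        apply mul_le_of_le_one_right (norm_nonneg c) hxb'.le
      rw [inner_sub_right] at hcs
      simp only [hmdef] at ht
      linarith
    · have h1 : Ah x - bh = w := by rw [← hAc_apply, hxw]; abel
      rw [h1]
      have : (⟪c, x⟫ : ℝ) - p - (⟪c, x⟫ - p - t) = t := by ring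
      rw [this]
  have hSne : ((0 : W), m - 1) ∈ S := by
    constructor
    · simp only [Set.mem_preimage, zero_add, hUdef]
      exact ⟨xh, ⟨hxhK, Metric.mem_ball_self one_pos⟩, by rw [hAc_apply, hAhxh]⟩
    · simp only [Set.mem_Iio]; linarith
  have hintG : (interior G).Nonempty :=
    ⟨((0 : W), m - 1), interior_maximal hSsubG hSopen hSne⟩
  -- (0,0) is not in the interior of G
  have hGnotop : ∀ t : ℝ, 0 < t → ((0 : W), t) ∉ G := by
    rintro t ht ⟨x, hx, s, hs, heq⟩
    rw [Prod.ext_iff] at heq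
    obtain ⟨h1, h2⟩ := heq
    have hAhb : Ah x = bh := by
      have := h1.symm
      rwa [sub_eq_zero] at this
    have hAxb : A x = b := by
      have := congrArg (Subtype.val) hAhb
      simpa [hAh_coe, hbhdef] using this
    have := hub x hx hAxb
    simp only at h2
    linarith
  have h00 : ((0 : W), (0 : ℝ)) ∉ interior G := by
    intro h
    obtain ⟨δ, hδ, hball⟩ := Metric.isOpen_iff.1 isOpen_interior _ h
    have hmem : ((0 : W), δ/2) ∈ G := by
      apply interior_subset
      apply hball
      rw [Metric.mem_ball]
      have hd : dist (((0 : W), δ/2)) (((0 : W), (0 : ℝ))) = δ/2 := by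
        rw [Prod.dist_eq]
        simp [Real.dist_eq, abs_of_pos hδ, max_eq_right (by positivity : (0:ℝ) ≤ δ/2)]
      rw [hd]
      linarith
    exact hGnotop (δ/2) (by positivity) hmem
  -- separate
  obtain ⟨f, hf⟩ := geometric_hahn_banach_open_point hGconv.interior isOpen_interior h00
  have hf0 : f ((0 : W), (0 : ℝ)) = 0 := by
    have h : ((0 : W), (0 : ℝ)) = (0 : W × ℝ) := rfl
    rw [h, map_zero]
  have hfneg : ∀ z ∈ interior G, f z < 0 := by
    intro z hz
    have := hf z hz
    rwa [hf0] at this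
  have hfle : ∀ z ∈ G, f z ≤ 0 := by
    intro z hz
    by_contra hpos
    push_neg at hpos
    obtain ⟨z0, hz0⟩ := hintG
    have hz0f : f z0 < 0 := hfneg z0 hz0
    set t : ℝ := f z / (f z - f z0) with htdef
    have hden : 0 < f z - f z0 := by linarith
    have ht0 : 0 < t := div_pos hpos hden
    have ht1 : t < 1 := by
      rw [htdef, div_lt_one hden]; linarith
    have hmem : t • z0 + (1 - t) • z ∈ interior G :=
      hGconv.combo_interior_self_mem_interior hz0 hz ht0 (by linarith) (by ring)
    have hlt := hfneg _ hmem
    rw [map_add, map_smul, map_smul, smul_eq_mul, smul_eq_mul] at hlt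
    have heq0 : t * f z0 + (1 - t) * f z = 0 := by
      rw [htdef]; field_simp; ring
    linarith
  -- decompose f
  set g : ↥W →L[ℝ] ℝ := f.comp (ContinuousLinearMap.inl ℝ ↥W ℝ) with hgdef
  set β : ℝ := f ((0 : W), (1 : ℝ)) with hβdef
  have hfsplit : ∀ (w : W) (t : ℝ), f (w, t) = g w + t * β := by
    intro w t
    have h1 : ((w, t) : ↥W × ℝ) = (w, 0) + (0, t) := by simp
    have h2 : (((0 : W), t) : ↥W × ℝ) = t • ((0 : W), (1 : ℝ)) := by simp
    rw [h1, map_add, h2, map_smul, smul_eq_mul]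
    rfl
  have hkey : ∀ x ∈ K, ∀ s : ℝ, 0 ≤ s → g (Ah x - bh) + (⟪c, x⟫ - p - s) * β ≤ 0 := by
    intro x hx s hs
    have := hfle _ ⟨x, hx, s, hs, rfl⟩
    rwa [hfsplit] at this
  have hq : ⟪c, xh⟫ - p ≤ 0 := by have := hub xh hxhK' hxhA; linarith
  have hβ0 : 0 ≤ β := by
    by_contra hcon
    push_neg at hcon
    have hk := hkey xh hxhK' 1 zero_le_one
    rw [hAhxh, sub_self, map_zero, zero_add] at hk
    have h2 : (0:ℝ) < (⟪c, xh⟫ - p - 1) * β := mul_pos_of_neg_of_neg (by linarith) hcon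
    linarith
  have hβpos : 0 < β := by
    rcases hβ0.lt_or_eq with hlt | heq
    · exact hlt
    exfalso
    have hg0 : ∀ x ∈ K, g (Ah x) ≤ g bh := by
      intro x hx
      have hk := hkey x hx 0 le_rfl
      rw [← heq, mul_zero, add_zero, map_sub] at hk
      linarith
    obtain ⟨r, hr, hball⟩ := Metric.isOpen_iff.1 isOpen_interior xh hxhK
    have hφ : ∀ v : E, ‖v‖ < r → g (Ah v) ≤ 0 := by
      intro v hv
      have hmem : xh + v ∈ K := by
        apply interior_subset
        apply hball
        rw [Metric.mem_ball, dist_eq_norm]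
        simpa using hv
      have h1 := hg0 _ hmem
      rw [map_add, map_add, ← hAhxh] at h1
      linarith
    have hφ0 : ∀ v : E, g (Ah v) = 0 := by
      intro v
      rcases eq_or_ne v 0 with rfl | hv0
      · simp
      have hvn : 0 < ‖v‖ := norm_pos_iff.2 hv0
      set w := (r / (2 * ‖v‖)) • v with hwdef
      have hwr : (0:ℝ) < r / (2 * ‖v‖) := by positivity
      have hwn : ‖w‖ < r := by
        rw [hwdef, norm_smul, Real.norm_eq_abs, abs_of_pos hwr]
        rw [div_mul_eq_mul_div, mul_comm]
        rw [div_lt_iff₀ (by positivity)]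
        nlinarith
      have h1 := hφ w hwn
      have h2 := hφ (-w) (by rwa [norm_neg])
      rw [map_neg, map_neg] at h2
      have h3 : g (Ah w) = 0 := le_antisymm h1 (by linarith)
      rw [hwdef, map_smul, map_smul, smul_eq_mul] at h3
      have := mul_eq_zero.1 h3
      rcases this with h | h
      · exact absurd h hwr.ne'
      · exact h
    have hgzero : ∀ w : W, g w = 0 := by
      intro w
      obtain ⟨x, hx⟩ := hAsurj w
      rw [← hx, hAc_apply, hφ0]
    obtain ⟨z0, hz0⟩ := hintG
    have hneg : f z0 < 0 := hfneg z0 hz0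
    have hzero : f z0 = 0 := by
      obtain ⟨w0, t0⟩ := z0
      rw [hfsplit, hgzero, ← heq, mul_zero, add_zero]
    linarith
  -- Riesz representation and construction of the dual optimal point
  set uW : W := (InnerProductSpace.toDual ℝ ↥W).symm g with huWdef
  have huW : ∀ w : W, ⟪uW, w⟫ = g w := fun w => InnerProductSpace.toDual_symm_apply
  set y : F := (-β⁻¹) • (uW : F) with hydef
  have hip : ∀ x : E, ⟪A x - b, (uW : F)⟫ = g (Ah x - bh) := by
    intro x
    have hcoe : ((Ah x - bh : W) : F) = A x - b := by
      rw [Submodule.coe_sub, hAh_coe]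
    rw [← huW, real_inner_comm, Submodule.coe_inner, hcoe]
  have hstar : ∀ x ∈ K, ⟪c, x⟫ - p ≤ ⟪A x, y⟫ - ⟪b, y⟫ := by
    intro x hx
    have h1 := hkey x hx 0 le_rfl
    rw [sub_zero] at h1
    have h2 := hip x
    have h3 : ⟪A x - b, y⟫ = -β⁻¹ * ⟪A x - b, (uW : F)⟫ := by
      rw [hydef, real_inner_smul_right]
    have h4 : ⟪A x - b, y⟫ = ⟪A x, y⟫ - ⟪b, y⟫ := inner_sub_left _ _ _
    have hβi : (0:ℝ) < β⁻¹ := inv_pos.2 hβpos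
    have hexp : β⁻¹ * (g (Ah x - bh) + (⟪c, x⟫ - p) * β)
        = β⁻¹ * g (Ah x - bh) + (⟪c, x⟫ - p) := by
      field_simp
    have h5 := mul_le_mul_of_nonneg_left h1 hβi.le
    rw [mul_zero, hexp] at h5
    rw [h2] at h3
    linarith
  have hbley : ⟪b, y⟫ ≤ p := by
    have := hstar 0 h0K
    simpa using this
  have hyfeas : (LinearMap.adjoint A) y - c ∈ dualCone K := by
    intro x hx
    rw [inner_sub_right, LinearMap.adjoint_inner_right]
    by_contra hneg
    push_neg at hneg
    have hd : (0:ℝ) < ⟪x, c⟫ - ⟪A x, y⟫ := by linarith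
    set d : ℝ := ⟪x, c⟫ - ⟪A x, y⟫ with hddef
    set t : ℝ := (p - ⟪b, y⟫ + 1) / d with htdef
    have htpos : 0 < t := by
      apply div_pos _ hd
      linarith
    have htx : t • x ∈ K := by
      have := hKcone x hx x hx t 0 htpos.le le_rfl
      simpa using this
    have hs := hstar _ htx
    rw [map_smul, real_inner_smul_right, real_inner_smul_left] at hs
    have htd : t * d = p - ⟪b, y⟫ + 1 := by
      rw [htdef]; field_simp
    have hcx : ⟪c, x⟫ = ⟪x, c⟫ := real_inner_comm x c
    rw [hcx] at hs
    have hring : t * d = t * ⟪x, c⟫ - t * ⟪A x, y⟫ := by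
      rw [hddef]; ring
    linarith
  have hpley : p ≤ ⟪b, y⟫ := hweak xs hxsK hxsA y hyfeas
  have hpy : ⟪b, y⟫ = p := le_antisymm hbley hpley
  refine ⟨p, ⟨?_, ?_⟩, ⟨?_, ?_⟩, ⟨xs, hxsK, hxsA, rfl⟩, ⟨y, hyfeas, hpy⟩⟩
  · rintro rr ⟨x, hx, hAx, rfl⟩
    exact hub x hx hAx
  · intro rr hrr
    exact hrr ⟨xs, hxsK, hxsA, rfl⟩
  · rintro rr ⟨y', hy', rfl⟩
    exact hweak xs hxsK hxsA y' hy'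
  · intro rr hrr
    exact hrr ⟨y, hyfeas, hpy.symm⟩
end

section
/- Exactness of the Lasserre hierarchy: for every finite simple graph G = (V, E) with n vertices and every integer t with α(G) ≤ t ≤ n, the Lasserre bound of order t is exact, that is, las_t(G) = α(G). -/
/-- The (combinatorial) moment matrix of order `t` of a vector `y` indexed by subsets of `V`:
rows and columns are indexed by the subsets of `V` of cardinality at most `t`, and the
`(I, J)` entry is `y (I ∪ J)`. -/
def momentMatrix {V : Type*} [DecidableEq V] (t : ℕ) (y : Finset V → ℝ) :
    Matrix {J : Finset V // J.card ≤ t} {J : Finset V // J.card ≤ t} ℝ :=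
  fun I J => y (I.1 ∪ J.1)

/-- Feasibility for the semidefinite program defining the Lasserre bound of `G` of order `t`:
`y` is entrywise nonnegative on subsets of cardinality at most `2t`, normalized by `y ∅ = 1`,
vanishes on edges, and has a positive semidefinite moment matrix of order `t`. -/
def LasserreFeasible {V : Type*} [DecidableEq V] [Fintype V] (G : SimpleGraph V) (t : ℕ)
    (y : Finset V → ℝ) : Prop :=
  (∀ J : Finset V, J.card ≤ 2 * t → 0 ≤ y J) ∧
  y ∅ = 1 ∧
  (∀ i j : V, G.Adj i j → y {i, j} = 0) ∧
  (momentMatrix t y).PosSemidef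

/-- The Lasserre bound of `G` of order `t`. -/
noncomputable def lasserreBound {V : Type*} [DecidableEq V] [Fintype V]
    (G : SimpleGraph V) (t : ℕ) : ℝ :=
  sSup {r : ℝ | ∃ y : Finset V → ℝ, LasserreFeasible G t y ∧ r = ∑ i : V, y {i}}

/-- A set of vertices is independent if no two of its elements are adjacent. -/
def IsIndepSet {V : Type*} (G : SimpleGraph V) (I : Finset V) : Prop :=
  ∀ i ∈ I, ∀ j ∈ I, ¬ G.Adj i j

/-- The independence number `α(G)` of a finite graph `G`. -/
noncomputable def indepNum {V : Type*} [Fintype V] (G : SimpleGraph V) : ℕ :=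
  sSup {k : ℕ | ∃ I : Finset V, IsIndepSet G I ∧ I.card = k}

/-- The characteristic vector `χ^I` of `I ⊆ V`, indexed by subsets of `V`:
`χ^I_J = 1` if `J ⊆ I` and `χ^I_J = 0` otherwise. -/
def charVec {V : Type*} [DecidableEq V] (I : Finset V) : Finset V → ℝ :=
  fun J => if J ⊆ I then 1 else 0


section Aux
set_option linter.unusedSectionVars false
open Finset Matrix
variable {V : Type*} [DecidableEq V]



lemma sum_pow_neg_one (L : Finset V) :
    (∑ K ∈ L.powerset, (-1 : ℝ) ^ K.card) = if L = ∅ then 1 else 0 := by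
  have h := Finset.sum_powerset_neg_one_pow_card (x := L)
  have h2 : ((∑ m ∈ L.powerset, (-1 : ℤ) ^ m.card : ℤ) : ℝ)
      = ∑ m ∈ L.powerset, (-1:ℝ)^m.card := by push_cast; rfl
  rw [← h2, h]
  split <;> norm_num

/-- Sum of signs over the interval `[E, D]`. -/
lemma sum_superset_sign (D E : Finset V) (hE : E ⊆ D) :
    (∑ B ∈ D.powerset with E ⊆ B, (-1 : ℝ) ^ B.card)
      = if E = D then (-1) ^ D.card else 0 := by
  have key : (∑ B ∈ D.powerset with E ⊆ B, (-1 : ℝ) ^ B.card)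
      = ∑ C ∈ (D \ E).powerset, (-1:ℝ) ^ (C.card + E.card) := by
    refine Finset.sum_nbij' (fun B => B \ E) (fun C => C ∪ E) ?_ ?_ ?_ ?_ ?_
    · intro B hB
      simp only [mem_filter, mem_powerset] at hB
      exact mem_powerset.2 (sdiff_subset_sdiff hB.1 le_rfl)
    · intro C hC
      simp only [mem_powerset] at hC
      simp only [mem_filter, mem_powerset]
      exact ⟨union_subset (hC.trans sdiff_subset) hE, subset_union_right⟩
    · intro B hB
      simp only [mem_filter, mem_powerset] at hB
      exact sdiff_union_of_subset hB.2
    · intro C hC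
      simp only [mem_powerset] at hC
      have : Disjoint C E := disjoint_of_subset_left hC sdiff_disjoint
      exact union_sdiff_cancel_right this
    · intro B hB
      simp only [mem_filter, mem_powerset] at hB
      have h3 : (B \ E).card + E.card = B.card := by
        rw [card_sdiff_of_subset hB.2]
        exact Nat.sub_add_cancel (card_le_card hB.2)
      simp only [h3]
  rw [key]
  have h4 : ∑ C ∈ (D \ E).powerset, (-1:ℝ) ^ (C.card + E.card)
      = ((-1:ℝ)^E.card) * ∑ C ∈ (D \ E).powerset, (-1:ℝ) ^ C.card := by
    rw [mul_sum]; exact sum_congr rfl fun C _ => by ring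
  rw [h4, sum_pow_neg_one]
  rcases eq_or_ne E D with rfl | hne
  · simp
  · have h5 : D \ E ≠ ∅ := by
      intro h
      exact hne (Finset.Subset.antisymm hE (sdiff_eq_empty_iff_subset.mp h))
    simp [h5, hne]

/-- The key regrouping identity: summing signs over pairs of sets between `S` and `K`
whose union is `K`. -/
lemma pair_sum (S K : Finset V) (hSK : S ⊆ K) :
    (∑ I ∈ K.powerset with S ⊆ I, ∑ J ∈ K.powerset with S ⊆ J,
        (if I ∪ J = K then (-1 : ℝ) ^ (I.card + J.card) else 0))
      = (-1) ^ (K.card + S.card) := by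
  have inner : ∀ I ∈ K.powerset.filter (S ⊆ ·),
      (∑ J ∈ K.powerset with S ⊆ J, (if I ∪ J = K then (-1 : ℝ) ^ (I.card + J.card) else 0))
        = (-1)^I.card * (if S ∪ (K \ I) = K then (-1) ^ K.card else 0) := by
    intro I hI
    simp only [mem_filter, mem_powerset] at hI
    have step1 : (∑ J ∈ K.powerset with S ⊆ J, (if I ∪ J = K then (-1 : ℝ) ^ (I.card + J.card) else 0))
        = ∑ J ∈ K.powerset with S ∪ (K \ I) ⊆ J, (-1:ℝ)^(I.card + J.card) := by
      rw [Finset.sum_filter, Finset.sum_filter]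
      refine sum_congr rfl fun J hJ => ?_
      rw [mem_powerset] at hJ
      have hiff : (S ⊆ J ∧ I ∪ J = K) ↔ S ∪ (K \ I) ⊆ J := by
        constructor
        · rintro ⟨h1, h2⟩
          refine union_subset h1 ?_
          intro x hx
          rw [mem_sdiff] at hx
          have := h2 ▸ hx.1
          rw [← h2] at hx
          rcases mem_union.1 hx.1 with h | h
          · exact absurd h hx.2
          · exact h
        · intro h
          constructor
          · exact subset_union_left.trans h
          · apply Finset.Subset.antisymm
            · exact union_subset hI.1 hJ
            · intro x hx
              by_cases hxI : x ∈ I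
              · exact mem_union_left _ hxI
              · exact mem_union_right _ (h (mem_union_right _ (mem_sdiff.2 ⟨hx, hxI⟩)))
      by_cases hc : S ⊆ J ∧ I ∪ J = K
      · rw [if_pos hc.2, if_pos hc.1, if_pos (hiff.1 hc)]
      · rw [if_neg (fun h => hc ⟨(subset_union_left.trans h), (hiff.2 h).2⟩)]
        by_cases h1 : S ⊆ J
        · rw [if_pos h1, if_neg (fun h2 => hc ⟨h1, h2⟩)]
        · rw [if_neg h1]
    rw [step1]
    have step2 : ∑ J ∈ K.powerset with S ∪ (K \ I) ⊆ J, (-1:ℝ)^(I.card + J.card)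
        = (-1:ℝ)^I.card * ∑ J ∈ K.powerset with S ∪ (K \ I) ⊆ J, (-1:ℝ)^J.card := by
      rw [mul_sum]; exact sum_congr rfl fun J _ => by rw [pow_add]
    rw [step2, sum_superset_sign K _ (union_subset hSK sdiff_subset)]
  rw [Finset.sum_congr rfl inner]
  -- now only I = S contributes
  have hSmem : S ∈ K.powerset.filter (S ⊆ ·) := by
    simp [mem_filter, mem_powerset, hSK]
  rw [Finset.sum_eq_single_of_mem S hSmem]
  · have : S ∪ (K \ S) = K := union_sdiff_of_subset hSK
    rw [if_pos this, ← pow_add]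
    ring_nf
  · intro I hI hne
    simp only [mem_filter, mem_powerset] at hI
    have : ¬ (S ∪ (K \ I) = K) := by
      intro h
      apply hne
      apply Finset.Subset.antisymm _ hI.2
      intro x hxI
      have hxK : x ∈ K := hI.1 hxI
      rw [← h] at hxK
      rcases mem_union.1 hxK with h1 | h1
      · exact h1
      · exact absurd hxI (mem_sdiff.1 h1).2
    rw [if_neg this, mul_zero]

/-- `∑_{K ⊆ L} |K| (-1)^{|K|} = -[|L| = 1]`. -/
lemma sum_card_sign (L : Finset V) :
    (∑ K ∈ L.powerset, (K.card : ℝ) * (-1) ^ K.card)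
      = if L.card = 1 then -1 else 0 := by
  have expand : ∀ K ∈ L.powerset, (K.card : ℝ) * (-1) ^ K.card
      = ∑ i ∈ L, (if i ∈ K then (-1:ℝ)^K.card else 0) := by
    intro K hK
    rw [mem_powerset] at hK
    rw [Finset.sum_ite_mem, Finset.sum_const, inter_eq_right.mpr hK]
    simp [mul_comm]
  rw [Finset.sum_congr rfl expand, Finset.sum_comm]
  have inner : ∀ i ∈ L, (∑ K ∈ L.powerset, if i ∈ K then (-1:ℝ)^K.card else 0)
      = if {i} = L then (-1:ℝ)^L.card else 0 := by
    intro i hi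
    rw [← Finset.sum_filter]
    have : L.powerset.filter (fun K => i ∈ K) = L.powerset.filter (fun K => {i} ⊆ K) := by
      apply filter_congr; intro K _; simp [singleton_subset_iff]
    rw [this, sum_superset_sign L {i} (singleton_subset_iff.2 hi)]
  rw [Finset.sum_congr rfl inner]
  rcases Nat.lt_trichotomy L.card 1 with h | h | h
  · interval_cases h' : L.card
    · rw [card_eq_zero] at h'
      subst h'
      simp
  · rcases card_eq_one.1 h with ⟨a, rfl⟩
    rw [Finset.sum_eq_single_of_mem a (mem_singleton_self a)]
    · simp
    · intro b hb hne
      rw [if_neg]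
      intro hE
      exact hne (by simpa using hE)
  · have : ∀ i ∈ L, ¬ ({i} = L) := by
      intro i _ hE
      rw [← hE] at h
      simp at h
    rw [Finset.sum_congr rfl (fun i hi => if_neg (this i hi))]
    rw [Finset.sum_const_zero, if_neg (by omega)]

lemma psd_entry_eq_zero {n : Type*} [Fintype n] [DecidableEq n] {M : Matrix n n ℝ}
    (hM : M.PosSemidef) {a : n} (ha : M a a = 0) (b : n) : M a b = 0 := by
  obtain ⟨B, hB⟩ : ∃ B : Matrix n n ℝ, M = B.conjTranspose * B := by
    open scoped MatrixOrder in
    obtain ⟨B, hB⟩ := CStarAlgebra.nonneg_iff_eq_star_mul_self.mp hM.nonneg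
    exact ⟨B, hB⟩
  subst hB
  have hsum : (B.conjTranspose * B) a a = ∑ k, B k a * B k a := by
    simp [Matrix.mul_apply, Matrix.conjTranspose_apply]
  rw [hsum] at ha
  have h0 : ∀ k ∈ Finset.univ, B k a = 0 := by
    intro k hk
    have hz := (Finset.sum_eq_zero_iff_of_nonneg (fun k _ => mul_self_nonneg (B k a))).1 ha k hk
    nlinarith [hz]
  simp only [Matrix.mul_apply, Matrix.conjTranspose_apply, star_trivial]
  exact Finset.sum_eq_zero fun k hk => by rw [h0 k hk, zero_mul]

lemma psd_of_outer {n : Type*} [Fintype n] [DecidableEq n] (v : n → ℝ) :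
    (Matrix.of fun i j => v i * v j : Matrix n n ℝ).PosSemidef := by
  refine Matrix.PosSemidef.of_dotProduct_mulVec_nonneg ?_ ?_
  · unfold Matrix.IsHermitian
    ext i j
    rw [Matrix.conjTranspose_apply]
    simp only [Matrix.of_apply, star_trivial]
    ring
  · intro x
    have : dotProduct (star x) ((Matrix.of fun i j => v i * v j : Matrix n n ℝ) *ᵥ x)
        = (∑ i, v i * x i) * (∑ i, v i * x i) := by
      simp only [dotProduct, Matrix.mulVec, star_trivial, Matrix.of_apply]
      rw [Finset.sum_mul]
      refine Finset.sum_congr rfl fun i _ => ?_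
      rw [Finset.mul_sum, Finset.mul_sum]
      refine Finset.sum_congr rfl fun j _ => by ring
    rw [this]
    exact mul_self_nonneg _

end Aux
section Graph
set_option linter.unusedSectionVars false
open Finset
variable {V : Type*} [DecidableEq V] [Fintype V] {G : SimpleGraph V}

lemma isIndepSet_subset {I J : Finset V} (hJ : IsIndepSet G J) (h : I ⊆ J) : IsIndepSet G I :=
  fun i hi j hj => hJ i (h hi) j (h hj)

lemma isIndepSet_empty : IsIndepSet G ∅ := fun i hi => absurd hi (Finset.notMem_empty i)

lemma isIndepSet_singleton (i : V) : IsIndepSet G {i} := by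
  unfold IsIndepSet
  simp only [Finset.mem_singleton]
  rintro a rfl b rfl
  exact G.loopless.irrefl _

lemma bddAbove_indepSet (G : SimpleGraph V) :
    BddAbove {k : ℕ | ∃ I : Finset V, IsIndepSet G I ∧ I.card = k} := by
  refine ⟨Fintype.card V, ?_⟩
  rintro k ⟨I, -, rfl⟩
  exact Finset.card_le_univ I

lemma card_le_indepNum {I : Finset V} (hI : IsIndepSet G I) : I.card ≤ indepNum G :=
  le_csSup (bddAbove_indepSet G) ⟨I, hI, rfl⟩

lemma exists_indep_card (G : SimpleGraph V) :
    ∃ I : Finset V, IsIndepSet G I ∧ I.card = indepNum G := by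
  have hne : {k : ℕ | ∃ I : Finset V, IsIndepSet G I ∧ I.card = k}.Nonempty :=
    ⟨0, ∅, isIndepSet_empty, Finset.card_empty⟩
  exact Nat.sSup_mem hne (bddAbove_indepSet G)

lemma vanish {t : ℕ} {y : Finset V → ℝ} (hedge : ∀ i j : V, G.Adj i j → y {i, j} = 0)
    (hPSD : (momentMatrix t y).PosSemidef) :
    ∀ K : Finset V, K.card ≤ 2 * t → ¬ IsIndepSet G K → y K = 0 := by
  classical
  -- step A : sets of size at most t+1
  have stepA : ∀ A : Finset V, A.card ≤ t + 1 → ¬ IsIndepSet G A → y A = 0 := by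
    intro A hA hdep
    unfold IsIndepSet at hdep
    push_neg at hdep
    obtain ⟨i, hi, j, hj, hadj⟩ := hdep
    have hij : i ≠ j := G.ne_of_adj hadj
    have hsub : ({i, j} : Finset V) ⊆ A := by
      rw [Finset.insert_subset_iff, Finset.singleton_subset_iff]; exact ⟨hi, hj⟩
    have hcard2 : ({i, j} : Finset V).card = 2 := Finset.card_pair hij
    by_cases hA2 : A.card ≤ 2
    · have : ({i, j} : Finset V) = A :=
        Finset.eq_of_subset_of_card_le hsub (by omega)
      rw [← this]; exact hedge i j hadj
    · have ht2 : 2 ≤ t := by omega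
      set u : {J : Finset V // J.card ≤ t} := ⟨{i, j}, by omega⟩ with hu
      have hvcard : (A \ {i}).card ≤ t := by
        have := Finset.card_sdiff_of_subset (Finset.singleton_subset_iff.2 hi)
        have : (A \ {i}).card = A.card - 1 := by
          rw [Finset.card_sdiff_of_subset (Finset.singleton_subset_iff.2 hi), Finset.card_singleton]
        omega
      set v : {J : Finset V // J.card ≤ t} := ⟨A \ {i}, hvcard⟩ with hv
      have huu : momentMatrix t y u u = 0 := by
        show y ({i, j} ∪ {i, j}) = 0
        rw [Finset.union_self]; exact hedge i j hadj
      have hres := psd_entry_eq_zero hPSD huu v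
      have hU : ({i, j} : Finset V) ∪ (A \ {i}) = A := by
        ext x
        simp only [Finset.mem_union, Finset.mem_insert, Finset.mem_singleton, Finset.mem_sdiff]
        constructor
        · rintro ((rfl | rfl) | ⟨h, -⟩)
          · exact hi
          · exact hj
          · exact h
        · intro hx
          by_cases hxi : x = i
          · exact Or.inl (Or.inl hxi)
          · exact Or.inr ⟨hx, hxi⟩
      have : momentMatrix t y u v = y A := by
        show y ({i, j} ∪ (A \ {i})) = y A
        rw [hU]
      rw [← this]; exact hres
  intro K hK hdep
  by_cases hK1 : K.card ≤ t + 1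
  · exact stepA K hK1 hdep
  · -- K.card ≥ t + 2, hence t ≥ 2
    unfold IsIndepSet at hdep
    push_neg at hdep
    obtain ⟨i, hi, j, hj, hadj⟩ := hdep
    have hij : i ≠ j := G.ne_of_adj hadj
    have hsub : ({i, j} : Finset V) ⊆ K := by
      rw [Finset.insert_subset_iff, Finset.singleton_subset_iff]; exact ⟨hi, hj⟩
    have hcard2 : ({i, j} : Finset V).card = 2 := Finset.card_pair hij
    have ht2 : 2 ≤ t := by omega
    have hcardd : (K \ {i, j}).card = K.card - 2 := by
      rw [Finset.card_sdiff_of_subset hsub, hcard2]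
    obtain ⟨A', hA'sub, hA'card⟩ := Finset.exists_subset_card_eq (s := K \ ({i, j} : Finset V)) (n := t - 2) (by omega)
    set A : Finset V := {i, j} ∪ A' with hAdef
    have hdisj : Disjoint ({i, j} : Finset V) A' :=
      (Finset.disjoint_of_subset_left hA'sub Finset.sdiff_disjoint).symm
    have hAcard : A.card = t := by
      rw [hAdef, Finset.card_union_of_disjoint hdisj, hcard2]
      omega
    have hAK : A ⊆ K := Finset.union_subset hsub (hA'sub.trans Finset.sdiff_subset)
    have hAdep : ¬ IsIndepSet G A := by
      intro hIA
      exact hIA i (Finset.mem_union_left _ (Finset.mem_insert_self i {j})) j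
        (Finset.mem_union_left _ (Finset.mem_insert_of_mem (Finset.mem_singleton_self j))) hadj
    have hyA : y A = 0 := stepA A (by omega) hAdep
    have hBcard : (K \ A).card ≤ t := by
      rw [Finset.card_sdiff_of_subset hAK]
      omega
    set u : {J : Finset V // J.card ≤ t} := ⟨A, le_of_eq hAcard⟩ with hu
    set v : {J : Finset V // J.card ≤ t} := ⟨K \ A, hBcard⟩ with hv
    have huu : momentMatrix t y u u = 0 := by
      show y (A ∪ A) = 0
      rw [Finset.union_self]; exact hyA
    have hres := psd_entry_eq_zero hPSD huu v
    have : momentMatrix t y u v = y K := by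
      show y (A ∪ (K \ A)) = y K
      rw [Finset.union_sdiff_of_subset hAK]
    rw [← this]; exact hres

end Graph

section Lower
set_option linter.unusedSectionVars false
open Finset
variable {V : Type*} [DecidableEq V] [Fintype V] {G : SimpleGraph V}

lemma charVec_feasible (t : ℕ) {I : Finset V} (hI : IsIndepSet G I) :
    LasserreFeasible G t (charVec I) := by
  refine ⟨fun J _ => ?_, ?_, ?_, ?_⟩
  · unfold charVec; split <;> norm_num
  · unfold charVec; rw [if_pos (Finset.empty_subset I)]
  · intro i j hadj
    unfold charVec
    rw [if_neg]
    intro hsub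
    exact hI i (hsub (Finset.mem_insert_self i {j})) j
      (hsub (Finset.mem_insert_of_mem (Finset.mem_singleton_self j))) hadj
  · have : momentMatrix t (charVec I)
        = Matrix.of fun A B : {J : Finset V // J.card ≤ t} =>
            (if A.1 ⊆ I then (1:ℝ) else 0) * (if B.1 ⊆ I then (1:ℝ) else 0) := by
      ext A B
      show charVec I (A.1 ∪ B.1) = _
      unfold charVec
      simp only [Matrix.of_apply, Finset.union_subset_iff]
      by_cases hA : A.1 ⊆ I <;> by_cases hB : B.1 ⊆ I <;> simp [hA, hB]
    rw [this]
    exact psd_of_outer _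

lemma charVec_sum (I : Finset V) : (∑ i : V, charVec I {i}) = (I.card : ℝ) := by
  unfold charVec
  simp only [Finset.singleton_subset_iff]
  rw [Finset.sum_ite_mem, Finset.univ_inter, Finset.sum_const]
  simp

end Lower

section Key
set_option linter.unusedSectionVars false
open Finset Matrix
variable {V : Type*} [DecidableEq V] [Fintype V]

/-- The finset of independent sets of `G`. -/
def IndF (G : SimpleGraph V) [DecidablePred (IsIndepSet G)] : Finset (Finset V) :=
  Finset.univ.filter (fun K => IsIndepSet G K)

lemma mem_IndF {G : SimpleGraph V} [DecidablePred (IsIndepSet G)] {K : Finset V} :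
    K ∈ IndF G ↔ IsIndepSet G K := by simp [IndF]

/-- The Möbius-type coefficients of `y` over independent sets. -/
noncomputable def lamF (G : SimpleGraph V) [DecidablePred (IsIndepSet G)]
    (y : Finset V → ℝ) (S : Finset V) : ℝ :=
  ∑ K ∈ (IndF G).filter (fun K => S ⊆ K), (-1 : ℝ) ^ (K.card + S.card) * y K

variable {G : SimpleGraph V} [DecidablePred (IsIndepSet G)] {y : Finset V → ℝ}

lemma swap_lam (w : Finset V → ℝ) :
    (∑ K ∈ IndF G, w K * lamF G y K)
      = ∑ L ∈ IndF G, ((-1:ℝ)^L.card * y L) * (∑ K ∈ L.powerset, w K * (-1:ℝ)^K.card) := by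
  unfold lamF
  have e1 : ∀ K ∈ IndF G, w K * (∑ L ∈ (IndF G).filter (fun L => K ⊆ L), (-1 : ℝ) ^ (L.card + K.card) * y L)
      = ∑ L ∈ IndF G, (if K ⊆ L then w K * ((-1 : ℝ) ^ (L.card + K.card) * y L) else 0) := by
    intro K _
    rw [← Finset.sum_filter, Finset.mul_sum]
  rw [Finset.sum_congr rfl e1, Finset.sum_comm]
  refine Finset.sum_congr rfl fun L hL => ?_
  have e2 : (IndF G).filter (fun K => K ⊆ L) = L.powerset := by
    ext K
    simp only [Finset.mem_filter, Finset.mem_powerset, mem_IndF]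
    exact ⟨fun h => h.2, fun h => ⟨isIndepSet_subset (mem_IndF.1 hL) h, h⟩⟩
  rw [← Finset.sum_filter, e2, Finset.mul_sum]
  refine Finset.sum_congr rfl fun K hK => ?_
  rw [pow_add]
  ring

lemma sum_lam : (∑ K ∈ IndF G, lamF G y K) = y ∅ := by
  have h := swap_lam (G := G) (y := y) (fun _ => 1)
  simp only [one_mul] at h
  rw [h]
  have e : ∀ L ∈ IndF G, ((-1:ℝ)^L.card * y L) * (∑ K ∈ L.powerset, (-1:ℝ)^K.card)
      = if L = ∅ then y L else 0 := by
    intro L _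
    rw [sum_pow_neg_one]
    split
    · subst ‹L = ∅›; simp
    · rw [mul_zero]
  rw [Finset.sum_congr rfl e, Finset.sum_ite_eq' (IndF G) ∅ y]
  rw [if_pos (mem_IndF.2 isIndepSet_empty)]

lemma sum_card_lam :
    (∑ K ∈ IndF G, (K.card : ℝ) * lamF G y K) = ∑ i : V, y {i} := by
  rw [swap_lam (fun K => (K.card : ℝ))]
  have e : ∀ L ∈ IndF G, ((-1:ℝ)^L.card * y L) * (∑ K ∈ L.powerset, (K.card:ℝ) * (-1:ℝ)^K.card)
      = if L.card = 1 then y L else 0 := by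
    intro L _
    rw [sum_card_sign]
    split
    · rename_i h1
      rw [h1, pow_one]
      ring
    · rw [mul_zero]
  rw [Finset.sum_congr rfl e, ← Finset.sum_filter]
  have e2 : (IndF G).filter (fun L => L.card = 1) = Finset.univ.image (fun i : V => ({i} : Finset V)) := by
    ext L
    simp only [Finset.mem_filter, Finset.mem_image, Finset.mem_univ, true_and, mem_IndF]
    constructor
    · rintro ⟨-, hc⟩
      obtain ⟨a, rfl⟩ := Finset.card_eq_one.1 hc
      exact ⟨a, rfl⟩
    · rintro ⟨a, rfl⟩
      exact ⟨isIndepSet_singleton a, Finset.card_singleton a⟩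
  rw [e2, Finset.sum_image (fun a _ b _ h => Finset.singleton_injective h)]

lemma lam_nonneg (hedge : ∀ i j : V, G.Adj i j → y {i, j} = 0) {t : ℕ}
    (hPSD : (momentMatrix t y).PosSemidef) (hαt : indepNum G ≤ t) (S : Finset V) :
    0 ≤ lamF G y S := by
  classical
  set E : Finset (Finset V) := (IndF G).filter (fun K => S ⊆ K) with hE
  have hmemE : ∀ {A : Finset V}, A ∈ E ↔ (IsIndepSet G A ∧ S ⊆ A) := by
    intro A
    rw [hE, Finset.mem_filter, mem_IndF]
  have hcardE : ∀ A ∈ E, A.card ≤ t := fun A hA =>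
    le_trans (card_le_indepNum (hmemE.1 hA).1) hαt
  set w : Finset V → ℝ := fun A => if IsIndepSet G A ∧ S ⊆ A then (-1:ℝ)^(A.card + S.card) else 0
    with hw
  set z : {J : Finset V // J.card ≤ t} → ℝ := fun I => w I.1 with hz
  have hq := hPSD.dotProduct_mulVec_nonneg z
  have hzz : star z = z := by funext i; exact star_trivial _
  rw [hzz] at hq
  have e1 : dotProduct z ((momentMatrix t y) *ᵥ z)
      = ∑ I : {J : Finset V // J.card ≤ t}, ∑ J : {J : Finset V // J.card ≤ t},
          w I.1 * (y (I.1 ∪ J.1) * w J.1) := by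
    simp only [dotProduct, Matrix.mulVec]
    refine Finset.sum_congr rfl fun I _ => ?_
    rw [Finset.mul_sum]
    exact Finset.sum_congr rfl fun J _ => rfl
  rw [e1] at hq
  set T : Finset (Finset V) := Finset.univ.filter (fun A : Finset V => A.card ≤ t) with hT
  have conv : ∀ f : Finset V → ℝ, (∑ I : {J : Finset V // J.card ≤ t}, f I.1) = ∑ A ∈ T, f A := by
    intro f
    exact (Finset.sum_subtype T (fun x => by simp [hT]) f).symm
  have e2 : (∑ I : {J : Finset V // J.card ≤ t}, ∑ J : {J : Finset V // J.card ≤ t},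
          w I.1 * (y (I.1 ∪ J.1) * w J.1))
      = ∑ A ∈ T, ∑ B ∈ T, w A * (y (A ∪ B) * w B) := by
    rw [conv (fun A => ∑ J : {J : Finset V // J.card ≤ t}, w A * (y (A ∪ J.1) * w J.1))]
    exact Finset.sum_congr rfl fun A _ => conv (fun B => w A * (y (A ∪ B) * w B))
  rw [e2] at hq
  have hET : E ⊆ T := fun A hA => by
    rw [hT, Finset.mem_filter]
    exact ⟨Finset.mem_univ _, hcardE A hA⟩
  have hwzero : ∀ A : Finset V, A ∉ E → w A = 0 := by
    intro A hA
    have hn : ¬ (IsIndepSet G A ∧ S ⊆ A) := fun hc => hA (hmemE.2 hc)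
    simp only [hw]
    exact if_neg hn
  -- restrict both sums to E
  have e3 : (∑ A ∈ T, ∑ B ∈ T, w A * (y (A ∪ B) * w B))
      = ∑ A ∈ E, ∑ B ∈ E, w A * (y (A ∪ B) * w B) := by
    rw [← Finset.sum_subset hET (fun A _ hA => Finset.sum_eq_zero fun B _ => by
      rw [hwzero A hA, zero_mul])]
    exact Finset.sum_congr rfl fun A _ => (Finset.sum_subset hET (fun B _ hB => by
      rw [hwzero B hB, mul_zero, mul_zero])).symm
  rw [e3] at hq
  -- each term equals a sum over K ∈ E
  have hsign : ∀ a b s : ℕ, (-1:ℝ)^(a+s) * (-1:ℝ)^(b+s) = (-1:ℝ)^(a+b) := by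
    intro a b s
    rw [← pow_add]
    have h : a + s + (b + s) = (a + b) + 2 * s := by ring
    rw [h, pow_add, pow_mul]
    norm_num
  have e4 : ∀ A ∈ E, ∀ B ∈ E, w A * (y (A ∪ B) * w B)
      = ∑ K ∈ E, (if A ∪ B = K then (-1:ℝ)^(A.card + B.card) * y K else 0) := by
    intro A hA B hB
    obtain ⟨hIA, hSA⟩ := hmemE.1 hA
    obtain ⟨hIB, hSB⟩ := hmemE.1 hB
    have hwA : w A = (-1:ℝ)^(A.card + S.card) := by rw [hw]; exact if_pos ⟨hIA, hSA⟩
    have hwB : w B = (-1:ℝ)^(B.card + S.card) := by rw [hw]; exact if_pos ⟨hIB, hSB⟩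
    have hterm : w A * (y (A ∪ B) * w B) = (-1:ℝ)^(A.card + B.card) * y (A ∪ B) := by
      rw [hwA, hwB, ← hsign A.card B.card S.card]
      ring
    rw [hterm]
    by_cases hU : A ∪ B ∈ E
    · rw [Finset.sum_eq_single_of_mem (A ∪ B) hU (fun K _ hne => if_neg (fun h => hne h.symm))]
      rw [if_pos rfl]
    · have hcU : (A ∪ B).card ≤ 2 * t := by
        have h1 := Finset.card_union_le A B
        have h2 := hcardE A hA
        have h3 := hcardE B hB
        omega
      have hnI : ¬ IsIndepSet G (A ∪ B) := fun h =>
        hU (hmemE.2 ⟨h, hSA.trans Finset.subset_union_left⟩)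
      rw [vanish hedge hPSD (A ∪ B) hcU hnI, mul_zero]
      exact (Finset.sum_eq_zero fun K hK => if_neg (fun h => hU (by rw [h]; exact hK))).symm
  have e5 : (∑ A ∈ E, ∑ B ∈ E, w A * (y (A ∪ B) * w B))
      = ∑ K ∈ E, ∑ A ∈ E, ∑ B ∈ E, (if A ∪ B = K then (-1:ℝ)^(A.card + B.card) * y K else 0) := by
    rw [Finset.sum_congr rfl (fun A hA => Finset.sum_congr rfl (fun B hB => e4 A hA B hB))]
    rw [Finset.sum_congr rfl (fun A (hA : A ∈ E) => Finset.sum_comm)]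
    exact Finset.sum_comm
  rw [e5] at hq
  -- compute each K-term via pair_sum
  have e6 : ∀ K ∈ E, (∑ A ∈ E, ∑ B ∈ E, (if A ∪ B = K then (-1:ℝ)^(A.card + B.card) * y K else 0))
      = (-1:ℝ)^(K.card + S.card) * y K := by
    intro K hK
    obtain ⟨hIK, hSK⟩ := hmemE.1 hK
    set P : Finset (Finset V) := K.powerset.filter (fun A => S ⊆ A) with hP
    have hPE : P ⊆ E := by
      intro A hA
      rw [hP, Finset.mem_filter, Finset.mem_powerset] at hA
      exact hmemE.2 ⟨isIndepSet_subset hIK hA.1, hA.2⟩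
    have hPmem : ∀ {A : Finset V}, A ∈ P ↔ (A ⊆ K ∧ S ⊆ A) := by
      intro A
      rw [hP, Finset.mem_filter, Finset.mem_powerset]
    have hzero1 : ∀ A ∈ E, A ∉ P →
        (∑ B ∈ E, (if A ∪ B = K then (-1:ℝ)^(A.card + B.card) * y K else 0)) = 0 := by
      intro A hA hAP
      have hnsub : ¬ A ⊆ K := fun h => hAP (hPmem.2 ⟨h, (hmemE.1 hA).2⟩)
      exact Finset.sum_eq_zero fun B _ => if_neg (fun h =>
        hnsub (by rw [← h]; exact Finset.subset_union_left))
    have hzero2 : ∀ A ∈ P, ∀ B ∈ E, B ∉ P →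
        (if A ∪ B = K then (-1:ℝ)^(A.card + B.card) * y K else 0) = 0 := by
      intro A _ B hB hBP
      have hnsub : ¬ B ⊆ K := fun h => hBP (hPmem.2 ⟨h, (hmemE.1 hB).2⟩)
      exact if_neg (fun h => hnsub (by rw [← h]; exact Finset.subset_union_right))
    rw [← Finset.sum_subset hPE hzero1]
    rw [Finset.sum_congr rfl (fun A hA => (Finset.sum_subset hPE (hzero2 A hA)).symm)]
    have efac : ∀ A ∈ P, ∀ B ∈ P, (if A ∪ B = K then (-1:ℝ)^(A.card + B.card) * y K else 0)
        = (if A ∪ B = K then (-1:ℝ)^(A.card + B.card) else 0) * y K := by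
      intro A _ B _
      split <;> ring
    rw [Finset.sum_congr rfl (fun A hA => Finset.sum_congr rfl (fun B hB => efac A hA B hB))]
    rw [Finset.sum_congr rfl (fun A (hA : A ∈ P) => (Finset.sum_mul P _ (y K)).symm), ← Finset.sum_mul]
    rw [hP]
    rw [pair_sum S K hSK]
  rw [Finset.sum_congr rfl e6] at hq
  unfold lamF
  rw [← hE]
  exact hq


end Key

/-- **Exactness of the Lasserre hierarchy**: for every graph `G` on `n` vertices and every
integer `t` with `α(G) ≤ t ≤ n`, the Lasserre bound of order `t` is exact:
`las_t(G) = α(G)`. -/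
theorem lasserreBound_eq_indepNum {V : Type*} [DecidableEq V] [Fintype V]
    (G : SimpleGraph V) (t : ℕ) (hαt : indepNum G ≤ t) (htn : t ≤ Fintype.card V) :
    lasserreBound G t = (indepNum G : ℝ) := by
  classical
  obtain ⟨I₀, hI₀, hI₀card⟩ := exists_indep_card G
  have hmem : ((indepNum G : ℝ)) ∈
      {r : ℝ | ∃ y : Finset V → ℝ, LasserreFeasible G t y ∧ r = ∑ i : V, y {i}} :=
    ⟨charVec I₀, charVec_feasible t hI₀, by rw [charVec_sum, hI₀card]⟩
  have hub : ∀ r ∈ {r : ℝ | ∃ y : Finset V → ℝ, LasserreFeasible G t y ∧ r = ∑ i : V, y {i}},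
      r ≤ (indepNum G : ℝ) := by
    rintro r ⟨y, hy, rfl⟩
    haveI : DecidablePred (IsIndepSet G) := Classical.decPred _
    obtain ⟨hpos, hempty, hedge, hPSD⟩ := hy
    have h1 : (∑ K ∈ IndF G, lamF G y K) = 1 := by rw [sum_lam, hempty]
    have h2 := sum_card_lam (G := G) (y := y)
    calc ∑ i : V, y {i} = ∑ K ∈ IndF G, (K.card : ℝ) * lamF G y K := h2.symm
      _ ≤ ∑ K ∈ IndF G, (indepNum G : ℝ) * lamF G y K := by
          refine Finset.sum_le_sum fun K hK => ?_
          exact mul_le_mul_of_nonneg_right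
            (by exact_mod_cast card_le_indepNum (mem_IndF.1 hK))
            (lam_nonneg hedge hPSD hαt K)
      _ = (indepNum G : ℝ) := by rw [← Finset.mul_sum, h1, mul_one]
  unfold lasserreBound
  exact le_antisymm (csSup_le ⟨_, hmem⟩ hub) (le_csSup ⟨(indepNum G : ℝ), hub⟩ hmem)
end

section
/- The first step of the Lasserre hierarchy coincides with the modified Lovász theta number: for every finite simple graph G = (V, E), las_1(G) = ϑ'(G). -/
/-- The modified Lovász theta number `ϑ'(G)`. -/
noncomputable def thetaPrime {V : Type*} [Fintype V] (G : SimpleGraph V) : ℝ :=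
  sSup {r : ℝ | ∃ X : Matrix V V ℝ, X.PosSemidef ∧ (∀ i j : V, 0 ≤ X i j) ∧
    X.trace = 1 ∧ (∀ i j : V, G.Adj i j → X i j = 0) ∧ r = ∑ i : V, ∑ j : V, X i j}


section Aux

open Matrix Finset

variable {V : Type*} [DecidableEq V] [Fintype V]

lemma sum_card_le_one (f : {J : Finset V // J.card ≤ 1} → ℝ) :
    ∑ I, f I = f ⟨∅, by simp⟩ + ∑ i : V, f ⟨{i}, by simp⟩ := by
  classical
  let g : Option V → {J : Finset V // J.card ≤ 1} := fun o =>
    Option.rec ⟨∅, by simp⟩ (fun i => ⟨{i}, by simp⟩) o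
  have hbij : Function.Bijective g := by
    constructor
    · rintro (_|i) (_|j) h
      · rfl
      · exact absurd (congrArg Subtype.val h) (fun hh => Finset.singleton_ne_empty j hh.symm)
      · exact absurd (congrArg Subtype.val h) (Finset.singleton_ne_empty i)
      · have : ({i} : Finset V) = {j} := congrArg Subtype.val h
        simp_all
    · rintro ⟨J, hJ⟩
      rcases Nat.le_one_iff_eq_zero_or_eq_one.mp hJ with h | h
      · exact ⟨none, by simp [g, Subtype.ext_iff, Finset.card_eq_zero.mp h]⟩
      · obtain ⟨a, rfl⟩ := Finset.card_eq_one.mp h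
        exact ⟨some a, rfl⟩
  rw [← Function.Bijective.sum_comp hbij f]
  simp [g]

lemma moment_quad (y : Finset V → ℝ) (h : (momentMatrix 1 y).PosSemidef)
    (c : ℝ) (v : V → ℝ) :
    0 ≤ c * c * y ∅ + 2 * c * (∑ i, v i * y {i}) +
      ∑ i, ∑ j, v i * v j * y ({i} ∪ {j}) := by
  classical
  set z : {J : Finset V // J.card ≤ 1} → ℝ :=
    fun I => if I.1 = ∅ then c else ∑ i ∈ I.1, v i with hz
  have h0 := h.dotProduct_mulVec_nonneg z
  rw [star_trivial] at h0
  have e1 : ∀ I : {J : Finset V // J.card ≤ 1},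
      (momentMatrix 1 y *ᵥ z) I = y (I.1 ∪ ∅) * c + ∑ j, y (I.1 ∪ {j}) * v j := by
    intro I
    show ∑ J, momentMatrix 1 y I J * z J = _
    rw [sum_card_le_one (fun J => momentMatrix 1 y I J * z J)]
    simp [z, momentMatrix]
  have e2 : dotProduct z (momentMatrix 1 y *ᵥ z) =
      c * c * y ∅ + 2 * c * (∑ i, v i * y {i}) + ∑ i, ∑ j, v i * v j * y ({i} ∪ {j}) := by
    show ∑ I, z I * (momentMatrix 1 y *ᵥ z) I = _
    rw [sum_card_le_one (fun I => z I * (momentMatrix 1 y *ᵥ z) I)]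
    simp only [e1]
    simp only [z, if_pos rfl, Finset.empty_union, Finset.union_empty,
      Finset.singleton_ne_empty, if_neg, Finset.sum_singleton, if_false, ite_false]
    rw [mul_add, Finset.mul_sum]
    have : ∀ i : V, v i * (y {i} * c + ∑ j, y ({i} ∪ {j}) * v j)
        = v i * y {i} * c + ∑ j, v i * v j * y ({i} ∪ {j}) := by
      intro i
      rw [mul_add, Finset.mul_sum]
      exact congrArg₂ (· + ·) (by ring) (Finset.sum_congr rfl fun j _ => by ring)
    rw [Finset.sum_congr rfl fun i _ => this i, Finset.sum_add_distrib, ← Finset.sum_mul]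
    have hc : ∑ i : V, c * (y {i} * v i) = (∑ i : V, v i * y {i}) * c := by
      rw [Finset.sum_mul]; exact Finset.sum_congr rfl fun i _ => by ring
    rw [hc]
    ring
  rw [e2] at h0
  exact h0

lemma psd_nonneg_smul {n : Type*} [Fintype n] {X : Matrix n n ℝ} (h : X.PosSemidef)
    {c : ℝ} (hc : 0 ≤ c) : (c • X).PosSemidef := by
  refine Matrix.posSemidef_iff_dotProduct_mulVec.mpr ⟨?_, ?_⟩
  · show (c • X)ᴴ = c • X
    rw [Matrix.conjTranspose_smul, h.1.eq]
    norm_num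
  · intro z
    rw [star_trivial, Matrix.smul_mulVec, dotProduct_smul]
    have h2 := h.dotProduct_mulVec_nonneg z
    rw [star_trivial] at h2
    exact smul_nonneg hc h2

lemma psd_entry_le {n : Type*} [Fintype n] {X : Matrix n n ℝ} (hX : X.PosSemidef)
    (i j : n) : X i j ≤ (X i i + X j j) / 2 := by
  obtain ⟨B, rfl⟩ := (show ∃ B : Matrix n n ℝ, X = Bᴴ * B by
    classical
    open scoped MatrixOrder in exact CStarAlgebra.nonneg_iff_eq_star_mul_self.mp hX.nonneg)
  have he : ∀ p q : n, (Bᴴ * B) p q = ∑ k, B k p * B k q := by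
    intro p q
    simp [Matrix.mul_apply, Matrix.conjTranspose_apply]
  have h0 : (0:ℝ) ≤ ∑ k, (B k i - B k j)^2 :=
    Finset.sum_nonneg fun k _ => sq_nonneg _
  have hexp : ∑ k, (B k i - B k j)^2
      = (∑ k, B k i * B k i) + (∑ k, B k j * B k j) - 2 * ∑ k, B k i * B k j := by
    rw [← Finset.sum_add_distrib, Finset.mul_sum, ← Finset.sum_sub_distrib]
    exact Finset.sum_congr rfl fun k _ => by ring
  rw [he i j, he i i, he j j]
  rw [hexp] at h0
  linarith

lemma psd_row_zero {n : Type*} [Fintype n] {X : Matrix n n ℝ} (hX : X.PosSemidef)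
    {i : n} (hi : X i i = 0) (j : n) : X i j = 0 := by
  obtain ⟨B, rfl⟩ := (show ∃ B : Matrix n n ℝ, X = Bᴴ * B by
    classical
    open scoped MatrixOrder in exact CStarAlgebra.nonneg_iff_eq_star_mul_self.mp hX.nonneg)
  have he : ∀ p q : n, (Bᴴ * B) p q = ∑ k, B k p * B k q := by
    intro p q
    simp [Matrix.mul_apply, Matrix.conjTranspose_apply]
  rw [he] at hi ⊢
  have hz : ∀ k, B k i = 0 := by
    intro k
    have h1 : ∀ k ∈ Finset.univ (α := n), (0:ℝ) ≤ B k i * B k i :=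
      fun k _ => mul_self_nonneg _
    have := (Finset.sum_eq_zero_iff_of_nonneg h1).mp hi k (Finset.mem_univ k)
    exact (mul_self_eq_zero).mp this
  simp [hz]

end Aux


open Matrix Finset in
/-- **The first step of the Lasserre hierarchy coincides with the modified Lovász theta
number**: for every finite simple graph `G`, `las_1(G) = ϑ'(G)`. -/
theorem lasserreBound_one_eq_thetaPrime {V : Type*} [DecidableEq V] [Fintype V]
    (G : SimpleGraph V) :
    lasserreBound G 1 = thetaPrime G := by
  classical
  unfold lasserreBound thetaPrime
  -- Boundedness of the Lasserre feasible values
  have hLbdd : BddAbove {r : ℝ | ∃ y : Finset V → ℝ,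
      LasserreFeasible G 1 y ∧ r = ∑ i : V, y {i}} := by
    refine ⟨(Fintype.card V : ℝ), ?_⟩
    rintro r ⟨y, hy, rfl⟩
    have h1 : ∀ i : V, y {i} ≤ 1 := by
      intro i
      have hq := moment_quad y hy.2.2.2 (y {i}) (fun j => if j = i then -1 else 0)
      have e1 : ∑ j : V, (if j = i then (-1:ℝ) else 0) * y {j} = - y {i} := by
        simp [ite_mul]
      have e2 : ∑ a : V, ∑ b : V,
          (if a = i then (-1:ℝ) else 0) * (if b = i then (-1:ℝ) else 0) * y ({a} ∪ {b})
          = y {i} := by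
        simp [ite_mul, Finset.mul_sum, Finset.sum_ite_eq']
      rw [hy.2.1, e1, e2] at hq
      nlinarith [hy.1 {i} (by norm_num)]
    calc ∑ i : V, y {i} ≤ ∑ _i : V, (1:ℝ) := Finset.sum_le_sum (fun i _ => h1 i)
    _ = (Fintype.card V : ℝ) := by simp
  -- 0 is a Lasserre feasible value
  have hL0 : (0:ℝ) ∈ {r : ℝ | ∃ y : Finset V → ℝ,
      LasserreFeasible G 1 y ∧ r = ∑ i : V, y {i}} := by
    refine ⟨fun J => if J = ∅ then 1 else 0, ⟨fun J _ => by positivity, by simp, ?_, ?_⟩, ?_⟩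
    · intro i j _
      simp [Finset.insert_ne_empty]
    · set A : Matrix Unit {J : Finset V // J.card ≤ 1} ℝ :=
        fun _ I => if I.1 = ∅ then 1 else 0 with hA
      have : momentMatrix 1 (fun J => if J = ∅ then (1:ℝ) else 0) = Aᴴ * A := by
        ext I J
        simp only [Matrix.mul_apply, Matrix.conjTranspose_apply]
        by_cases h1 : I.1 = ∅ <;> by_cases h2 : J.1 = ∅ <;>
          simp [momentMatrix, Matrix.mul_apply, Matrix.conjTranspose_apply, A,
            Finset.union_eq_empty, h1, h2]
      rw [this]
      exact Matrix.posSemidef_conjTranspose_mul_self A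
    · simp [Finset.singleton_ne_empty]
  have hlas0 : (0:ℝ) ≤ sSup {r : ℝ | ∃ y : Finset V → ℝ,
      LasserreFeasible G 1 y ∧ r = ∑ i : V, y {i}} := le_csSup hLbdd hL0
  -- Boundedness of the theta-prime feasible values
  have hTbdd : BddAbove {r : ℝ | ∃ X : Matrix V V ℝ, X.PosSemidef ∧ (∀ i j : V, 0 ≤ X i j) ∧
      X.trace = 1 ∧ (∀ i j : V, G.Adj i j → X i j = 0) ∧ r = ∑ i : V, ∑ j : V, X i j} := by
    refine ⟨(Fintype.card V : ℝ), ?_⟩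
    rintro r ⟨X, hX, hnn, htr, _, rfl⟩
    have htr' : ∑ i : V, X i i = 1 := by simpa [Matrix.trace, Matrix.diag] using htr
    calc ∑ i : V, ∑ j : V, X i j
        ≤ ∑ i : V, ∑ j : V, (X i i + X j j)/2 :=
          Finset.sum_le_sum fun i _ => Finset.sum_le_sum fun j _ => psd_entry_le hX i j
      _ = (Fintype.card V : ℝ) := by
          have hrow : ∀ i : V, ∑ j : V, (X i i + X j j)/2
              = ((Fintype.card V : ℝ) * X i i + 1)/2 := by
            intro i
            rw [← Finset.sum_div, Finset.sum_add_distrib, htr', Finset.sum_const,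
              Finset.card_univ, nsmul_eq_mul]
          rw [Finset.sum_congr rfl fun i _ => hrow i, ← Finset.sum_div,
            Finset.sum_add_distrib, ← Finset.mul_sum, htr', Finset.sum_const,
            Finset.card_univ, nsmul_eq_mul]
          ring
  -- Nonnegativity of the theta-prime bound
  have htheta0 : (0:ℝ) ≤ sSup {r : ℝ | ∃ X : Matrix V V ℝ, X.PosSemidef ∧
      (∀ i j : V, 0 ≤ X i j) ∧ X.trace = 1 ∧ (∀ i j : V, G.Adj i j → X i j = 0) ∧
      r = ∑ i : V, ∑ j : V, X i j} := by
    rcases isEmpty_or_nonempty V with hV | hV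
    · have hemp : {r : ℝ | ∃ X : Matrix V V ℝ, X.PosSemidef ∧ (∀ i j : V, 0 ≤ X i j) ∧
          X.trace = 1 ∧ (∀ i j : V, G.Adj i j → X i j = 0) ∧
          r = ∑ i : V, ∑ j : V, X i j} = ∅ := by
        ext r
        simp only [Set.mem_setOf_eq, Set.mem_empty_iff_false, iff_false, not_exists]
        rintro X ⟨_, _, htr, _, _⟩
        rw [Matrix.trace] at htr
        simp at htr
      rw [hemp, Real.sSup_empty]
    · obtain ⟨v⟩ := hV
      set X1 : Matrix V V ℝ := fun a b => (if a = v then 1 else 0) * (if b = v then 1 else 0)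
        with hX1
      have hmem : (1:ℝ) ∈ {r : ℝ | ∃ X : Matrix V V ℝ, X.PosSemidef ∧
          (∀ i j : V, 0 ≤ X i j) ∧ X.trace = 1 ∧ (∀ i j : V, G.Adj i j → X i j = 0) ∧
          r = ∑ i : V, ∑ j : V, X i j} := by
        refine ⟨X1, ?_, ?_, ?_, ?_, ?_⟩
        · set A : Matrix Unit V ℝ := fun _ a => if a = v then 1 else 0 with hA
          have : X1 = Aᴴ * A := by
            ext a b
            simp only [Matrix.mul_apply, Matrix.conjTranspose_apply]
            simp [X1, A, Matrix.mul_apply, Matrix.conjTranspose_apply]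
          rw [this]
          exact Matrix.posSemidef_conjTranspose_mul_self A
        · intro i j
          positivity
        · simp [Matrix.trace, Matrix.diag, X1, ite_mul, Finset.sum_ite_eq']
        · intro i j hadj
          have hne := G.ne_of_adj hadj
          by_cases h1 : i = v <;> by_cases h2 : j = v <;> simp_all [X1]
        · simp [X1, ite_mul, Finset.mul_sum, Finset.sum_ite_eq']
      exact le_trans zero_le_one (le_csSup hTbdd hmem)
  apply le_antisymm
  · -- Lasserre ≤ theta'
    apply Real.sSup_le _ htheta0
    rintro r ⟨y, hy, rfl⟩
    have hs0 : 0 ≤ ∑ i : V, y {i} :=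
      Finset.sum_nonneg fun i _ => hy.1 {i} (by norm_num)
    rcases eq_or_lt_of_le hs0 with h | hspos
    · rw [← h]; exact htheta0
    · set s : ℝ := ∑ i : V, y {i} with hs
      have hSig : s^2 ≤ ∑ i : V, ∑ j : V, y ({i} ∪ {j}) := by
        have hq := moment_quad y hy.2.2.2 (-s) (fun _ => 1)
        rw [hy.2.1] at hq
        simp only [one_mul] at hq
        nlinarith [hq]
      set X : Matrix V V ℝ := fun i j => y ({i} ∪ {j}) / s with hX
      have hXmem : (∑ i : V, ∑ j : V, X i j) ∈ {r : ℝ | ∃ X : Matrix V V ℝ, X.PosSemidef ∧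
          (∀ i j : V, 0 ≤ X i j) ∧ X.trace = 1 ∧ (∀ i j : V, G.Adj i j → X i j = 0) ∧
          r = ∑ i : V, ∑ j : V, X i j} := by
        refine ⟨X, ?_, ?_, ?_, ?_, rfl⟩
        · set f : V → {J : Finset V // J.card ≤ 1} := fun i => ⟨{i}, by simp⟩ with hf
          have hN := hy.2.2.2.submatrix f
          have hXN : X = s⁻¹ • ((momentMatrix 1 y).submatrix f f) := by
            ext i j
            simp [X, momentMatrix, Matrix.submatrix_apply, f, div_eq_inv_mul]
          rw [hXN]
          exact psd_nonneg_smul hN (inv_nonneg.mpr hspos.le)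
        · intro i j
          apply div_nonneg _ hspos.le
          apply hy.1
          calc ({i} ∪ {j} : Finset V).card ≤ ({i} : Finset V).card + ({j}: Finset V).card :=
            Finset.card_union_le _ _
          _ ≤ 2 * 1 := by simp
        · have : ∀ i : V, X i i = y {i} / s := by
            intro i; simp [X]
          rw [Matrix.trace]
          simp only [Matrix.diag]
          rw [Finset.sum_congr rfl fun i _ => this i, ← Finset.sum_div, ← hs,
            div_self hspos.ne']
        · intro i j hadj
          have : y ({i} ∪ {j}) = 0 := hy.2.2.1 i j hadj
          show y ({i} ∪ {j}) / s = 0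
          rw [this, zero_div]
      have hval : s ≤ ∑ i : V, ∑ j : V, X i j := by
        have : ∑ i : V, ∑ j : V, X i j = (∑ i : V, ∑ j : V, y ({i} ∪ {j})) / s := by
          simp [X, ← Finset.sum_div]
        rw [this, le_div_iff₀ hspos]
        nlinarith [hSig]
      exact le_trans hval (le_csSup hTbdd hXmem)
  · -- theta' ≤ Lasserre
    apply Real.sSup_le _ hlas0
    rintro r ⟨X, hX, hXnn, htr, hedge, rfl⟩
    set s : ℝ := ∑ i : V, ∑ j : V, X i j with hs
    have htr' : ∑ i : V, X i i = 1 := by simpa [Matrix.trace, Matrix.diag] using htr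
    have hXsym : ∀ i j : V, X j i = X i j := by
      intro i j
      have := congrFun (congrFun hX.1 i) j
      simpa [Matrix.conjTranspose_apply] using this
    have hs1 : 1 ≤ s := by
      rw [← htr']
      exact Finset.sum_le_sum fun i _ =>
        Finset.single_le_sum (fun j _ => hXnn i j) (Finset.mem_univ i)
    have hspos : 0 < s := lt_of_lt_of_le one_pos hs1
    have hsqrtpos : 0 < Real.sqrt s := Real.sqrt_pos.mpr hspos
    have hsqrtne : Real.sqrt s ≠ 0 := ne_of_gt hsqrtpos
    have hss : Real.sqrt s * Real.sqrt s = s := Real.mul_self_sqrt hspos.le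
    obtain ⟨B, hB⟩ := (show ∃ B : Matrix V V ℝ, X = Bᴴ * B by
      classical
      open scoped MatrixOrder in exact CStarAlgebra.nonneg_iff_eq_star_mul_self.mp hX.nonneg)
    have hXB : ∀ i j : V, X i j = ∑ k : V, B k i * B k j := by
      intro i j; rw [hB]; simp [Matrix.mul_apply, Matrix.conjTranspose_apply]
    have hrow0 : ∀ i : V, X i i = 0 → ∀ j : V, X i j = 0 :=
      fun i hi j => psd_row_zero hX hi j
    have hdiagnn : ∀ i : V, 0 ≤ X i i := fun i => hXnn i i
    set a : V → ℝ := fun i =>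
      if X i i = 0 then 0 else (∑ j : V, X i j) / (Real.sqrt s * X i i) with ha
    have hann : ∀ i : V, 0 ≤ a i := by
      intro i
      rw [ha]; dsimp only
      split
      · exact le_refl 0
      · exact div_nonneg (Finset.sum_nonneg fun j _ => hXnn i j)
          (mul_nonneg (Real.sqrt_nonneg s) (hdiagnn i))
    set y : Finset V → ℝ := fun J =>
      if J = ∅ then 1
      else if J.card = 1 then ∑ p ∈ J, ∑ q ∈ J, a p * a q * X p q
      else (∑ p ∈ J, ∑ q ∈ J \ {p}, a p * a q * X p q) / 2 with hydef
    have hy0 : y ∅ = 1 := by simp [hydef]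
    have hy1 : ∀ i : V, y {i} = a i * a i * X i i := by
      intro i
      simp [hydef, Finset.singleton_ne_empty]
    have hy2 : ∀ i j : V, i ≠ j → y {i, j} = a i * a j * X i j := by
      intro i j hij
      have hcard : ({i, j} : Finset V).card = 2 := Finset.card_pair hij
      have hne : ({i, j} : Finset V) ≠ ∅ := Finset.insert_ne_empty _ _
      have h1 : ({i, j} : Finset V) \ {i} = {j} := by
        rw [Finset.sdiff_singleton_eq_erase, Finset.erase_insert (by simp [hij])]
      have h2 : ({i, j} : Finset V) \ {j} = {i} := by
        rw [Finset.pair_comm i j, Finset.sdiff_singleton_eq_erase,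
          Finset.erase_insert (by simp [Ne.symm hij])]
      rw [hydef]
      dsimp only
      rw [if_neg hne, if_neg (by rw [hcard]; norm_num), Finset.sum_pair hij, h1, h2,
        Finset.sum_singleton, Finset.sum_singleton, hXsym i j]
      ring
    have hynn : ∀ J : Finset V, 0 ≤ y J := by
      intro J
      rw [hydef]; dsimp only
      split
      · norm_num
      · split
        · exact Finset.sum_nonneg fun p _ => Finset.sum_nonneg fun q _ =>
            mul_nonneg (mul_nonneg (hann p) (hann q)) (hXnn p q)
        · apply div_nonneg _ (by norm_num)
          exact Finset.sum_nonneg fun p _ => Finset.sum_nonneg fun q _ =>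
            mul_nonneg (mul_nonneg (hann p) (hann q)) (hXnn p q)
    have hyedge : ∀ i j : V, G.Adj i j → y {i, j} = 0 := by
      intro i j hadj
      rw [hy2 i j (G.ne_of_adj hadj), hedge i j hadj, mul_zero]
    -- the column sums
    have hcol : ∀ j : V, ∑ k : V, (∑ p : V, B k p) * B k j = ∑ p : V, X j p := by
      intro j
      calc ∑ k : V, (∑ p : V, B k p) * B k j
          = ∑ k : V, ∑ p : V, B k p * B k j :=
            Finset.sum_congr rfl fun k _ => by rw [Finset.sum_mul]
        _ = ∑ p : V, ∑ k : V, B k p * B k j := Finset.sum_comm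
        _ = ∑ p : V, X p j := Finset.sum_congr rfl fun p _ => (hXB p j).symm
        _ = ∑ p : V, X j p := Finset.sum_congr rfl fun p _ => hXsym j p
    have hw : ∑ k : V, (∑ p : V, B k p) * (∑ q : V, B k q) = s := by
      calc ∑ k : V, (∑ p : V, B k p) * (∑ q : V, B k q)
          = ∑ k : V, ∑ p : V, ∑ q : V, B k p * B k q :=
            Finset.sum_congr rfl fun k _ => Finset.sum_mul_sum _ _ _ _
        _ = ∑ p : V, ∑ k : V, ∑ q : V, B k p * B k q := Finset.sum_comm
        _ = ∑ p : V, ∑ q : V, ∑ k : V, B k p * B k q :=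
            Finset.sum_congr rfl fun p _ => Finset.sum_comm
        _ = ∑ p : V, ∑ q : V, X p q := by
            exact Finset.sum_congr rfl fun p _ => Finset.sum_congr rfl fun q _ => (hXB p q).symm
        _ = s := hs.symm
    have hpsd : (momentMatrix 1 y).PosSemidef := by
      set A : Matrix V {J : Finset V // J.card ≤ 1} ℝ := fun k I =>
        if I.1 = ∅ then (∑ p : V, B k p) / Real.sqrt s else ∑ p ∈ I.1, a p * B k p with hA
      have hAe : ∀ k : V, A k ⟨∅, by simp⟩ = (∑ p : V, B k p) / Real.sqrt s := by
        intro k; simp [hA]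
      have hAs : ∀ (k i : V), A k ⟨{i}, by simp⟩ = a i * B k i := by
        intro k i; simp [hA, Finset.singleton_ne_empty]
      have hcase2 : ∀ j : V, a j * a j * X j j = ∑ k : V, ((∑ p : V, B k p) / Real.sqrt s) * (a j * B k j) := by
        intro j
        have e : ∑ k : V, ((∑ p : V, B k p) / Real.sqrt s) * (a j * B k j)
            = (a j / Real.sqrt s) * ∑ k : V, (∑ p : V, B k p) * B k j := by
          rw [Finset.mul_sum]
          exact Finset.sum_congr rfl fun k _ => by ring
        rw [e, hcol j]
        by_cases hxj : X j j = 0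
        · have hr : ∑ p : V, X j p = 0 := Finset.sum_eq_zero fun p _ => hrow0 j hxj p
          rw [ha]; dsimp only
          rw [if_pos hxj, hr]
          ring
        · rw [ha]; dsimp only
          rw [if_neg hxj]
          field_simp
      have key : momentMatrix 1 y = Aᴴ * A := by
        ext I J
        have hAA : (Aᴴ * A) I J = ∑ k : V, A k I * A k J := by
          simp [Matrix.mul_apply, Matrix.conjTranspose_apply]
        rw [hAA]
        show y (I.1 ∪ J.1) = _
        obtain ⟨I, hI⟩ := I
        obtain ⟨J, hJ⟩ := J
        dsimp only
        rcases Nat.le_one_iff_eq_zero_or_eq_one.mp hI with hI' | hI'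
        · obtain rfl : I = ∅ := Finset.card_eq_zero.mp hI'
          rcases Nat.le_one_iff_eq_zero_or_eq_one.mp hJ with hJ' | hJ'
          · obtain rfl : J = ∅ := Finset.card_eq_zero.mp hJ'
            rw [Finset.empty_union, hy0]
            rw [Finset.sum_congr rfl fun k (_ : k ∈ Finset.univ) => by rw [hAe k]]
            rw [Finset.sum_congr rfl fun k (_ : k ∈ Finset.univ) =>
              (div_mul_div_comm _ _ _ _ : (∑ p : V, B k p) / Real.sqrt s * ((∑ q : V, B k q) / Real.sqrt s) = _)]
            rw [← Finset.sum_div, hss, hw, div_self hspos.ne']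
          · obtain ⟨j, rfl⟩ := Finset.card_eq_one.mp hJ'
            rw [Finset.empty_union, hy1]
            rw [Finset.sum_congr rfl fun k (_ : k ∈ Finset.univ) => by rw [hAe k, hAs k j]]
            exact hcase2 j
        · obtain ⟨i, rfl⟩ := Finset.card_eq_one.mp hI'
          rcases Nat.le_one_iff_eq_zero_or_eq_one.mp hJ with hJ' | hJ'
          · obtain rfl : J = ∅ := Finset.card_eq_zero.mp hJ'
            rw [Finset.union_empty, hy1]
            rw [Finset.sum_congr rfl fun k (_ : k ∈ Finset.univ) => by rw [hAe k, hAs k i]]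
            rw [Finset.sum_congr rfl fun k (_ : k ∈ Finset.univ) =>
              (by ring : a i * B k i * ((∑ p : V, B k p) / Real.sqrt s)
                = (∑ p : V, B k p) / Real.sqrt s * (a i * B k i))]
            exact hcase2 i
          · obtain ⟨j, rfl⟩ := Finset.card_eq_one.mp hJ'
            rw [Finset.sum_congr rfl fun k (_ : k ∈ Finset.univ) => by rw [hAs k i, hAs k j]]
            have e : ∑ k : V, a i * B k i * (a j * B k j) = a i * a j * X i j := by
              rw [hXB, Finset.mul_sum]
              exact Finset.sum_congr rfl fun k _ => by ring
            rw [e]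
            by_cases hij : i = j
            · subst hij
              rw [Finset.union_self]
              exact hy1 i
            · exact hy2 i j hij
      rw [key]
      exact Matrix.posSemidef_conjTranspose_mul_self A
    have hvalue : s ≤ ∑ i : V, y {i} := by
      set f : V → ℝ := fun i => Real.sqrt (X i i) with hf
      set g : V → ℝ := fun i => a i * Real.sqrt (X i i) * Real.sqrt s with hg
      have hfg : ∀ i : V, f i * g i = ∑ j : V, X i j := by
        intro i
        by_cases hxi : X i i = 0
        · have hrz : ∑ j : V, X i j = 0 := Finset.sum_eq_zero fun j _ => hrow0 i hxi j
          rw [hrz, hf, hg, ha]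
          dsimp only
          rw [if_pos hxi]
          ring
        · have hxx : Real.sqrt (X i i) * Real.sqrt (X i i) = X i i :=
            Real.mul_self_sqrt (hdiagnn i)
          rw [hf, hg, ha]
          dsimp only
          rw [if_neg hxi]
          have hsq : Real.sqrt (X i i) ≠ 0 := by
            intro hz
            exact hxi (by rw [← hxx, hz, mul_zero])
          field_simp
          linear_combination (∑ j : V, X i j) * hxx
      have hf2 : ∑ i : V, f i ^ 2 = 1 := by
        rw [← htr']
        exact Finset.sum_congr rfl fun i _ => by
          rw [hf]; dsimp only; rw [sq, Real.mul_self_sqrt (hdiagnn i)]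
      have hg2 : ∑ i : V, g i ^ 2 = (∑ i : V, y {i}) * s := by
        rw [Finset.sum_mul]
        refine Finset.sum_congr rfl fun i _ => ?_
        rw [hy1, hg]
        dsimp only
        have hxx : Real.sqrt (X i i) * Real.sqrt (X i i) = X i i :=
          Real.mul_self_sqrt (hdiagnn i)
        linear_combination (a i * a i * (Real.sqrt s * Real.sqrt s)) * hxx +
          (a i * a i * X i i) * hss
      have hCS := Finset.sum_mul_sq_le_sq_mul_sq Finset.univ f g
      rw [hf2, hg2, Finset.sum_congr rfl fun i (_ : i ∈ Finset.univ) => hfg i] at hCS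
      rw [← hs] at hCS
      nlinarith [hCS, hspos]
    exact le_trans hvalue
      (le_csSup hLbdd ⟨y, ⟨fun J _ => hynn J, hy0, hyedge, hpsd⟩, rfl⟩)
end

section
/- Cone characterization of full moment matrices: let V be a finite set with n = |V| elements and let y ∈ ℝ^{P_n(V)} be a vector indexed by the full power set of V. Then the moment matrix M_n(y) is positive semidefinite if and only if y lies in the finitely generated cone generated by the characteristic vectors, i.e., if and only if there exist nonnegative real numbers α_I, I ⊆ V, such that y = ∑_{I ⊆ V} α_I χ^I. -/
section AuxMomentCone

open Finset Matrix

private lemma alt_sum_aux {V : Type*} [DecidableEq V] [Fintype V] (I L : Finset V) :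
    (∑ J : Finset V, if I ⊆ J ∧ J ⊆ L then (-1 : ℝ) ^ (J.card - I.card) else 0) =
      if I = L then 1 else 0 := by
  by_cases hIL : I ⊆ L
  · have key : (∑ J : Finset V, if I ⊆ J ∧ J ⊆ L then (-1 : ℝ) ^ (J.card - I.card) else 0) =
        ∑ S ∈ (L \ I).powerset, (-1 : ℝ) ^ S.card := by
      rw [← Finset.sum_filter]
      refine Finset.sum_nbij' (fun J => J \ I) (fun S => I ∪ S) ?_ ?_ ?_ ?_ ?_
      · intro J hJ
        simp only [Finset.mem_filter, Finset.mem_univ, true_and] at hJ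
        exact Finset.mem_powerset.2 (Finset.sdiff_subset_sdiff hJ.2 le_rfl)
      · intro S hS
        simp only [Finset.mem_powerset] at hS
        simp only [Finset.mem_filter, Finset.mem_univ, true_and]
        exact ⟨Finset.subset_union_left, Finset.union_subset hIL (hS.trans (Finset.sdiff_subset))⟩
      · intro J hJ
        simp only [Finset.mem_filter, Finset.mem_univ, true_and] at hJ
        exact Finset.union_sdiff_of_subset hJ.1
      · intro S hS
        simp only [Finset.mem_powerset] at hS
        have hd : Disjoint I S :=
          Finset.disjoint_left.2 fun a haI haS => (Finset.mem_sdiff.1 (hS haS)).2 haI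
        simp [Finset.union_sdiff_cancel_left hd]
      · intro J hJ
        simp only [Finset.mem_filter, Finset.mem_univ, true_and] at hJ
        rw [Finset.card_sdiff_of_subset hJ.1]
    rw [key]
    have hz := @Finset.sum_powerset_neg_one_pow_card V _ (L \ I)
    have h2 : (∑ S ∈ (L \ I).powerset, (-1 : ℝ) ^ S.card) =
        ((∑ S ∈ (L \ I).powerset, (-1 : ℤ) ^ S.card : ℤ) : ℝ) := by push_cast; rfl
    rw [h2, hz]
    have hiff : L \ I = ∅ ↔ I = L := by
      rw [Finset.sdiff_eq_empty_iff_subset]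
      exact ⟨fun h => le_antisymm hIL h, fun h => h ▸ le_rfl⟩
    split_ifs with h1 h2 h2 <;> simp_all
  · rw [Finset.sum_eq_zero, if_neg]
    · rintro rfl; exact hIL le_rfl
    · intro J _
      rw [if_neg]
      rintro ⟨h1, h2⟩
      exact hIL (h1.trans h2)

private lemma neg_one_pow_sub_aux {n k : ℕ} (h : k ≤ n) :
    (-1 : ℝ) ^ (n - k) = (-1) ^ n * (-1) ^ k := by
  obtain ⟨m, rfl⟩ := Nat.exists_eq_add_of_le h
  rw [Nat.add_sub_cancel_left, pow_add, mul_comm ((-1:ℝ)^k), mul_assoc, ← pow_add,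
    ← two_mul, pow_mul]
  norm_num

private lemma alt_sum_aux' {V : Type*} [DecidableEq V] [Fintype V] (I L : Finset V) :
    (∑ J : Finset V, if I ⊆ J ∧ J ⊆ L then (-1 : ℝ) ^ (L.card - J.card) else 0) =
      if I = L then 1 else 0 := by
  have key : ∀ J : Finset V,
      (if I ⊆ J ∧ J ⊆ L then (-1 : ℝ) ^ (L.card - J.card) else 0) =
      (-1 : ℝ) ^ (L.card - I.card) *
        (if I ⊆ J ∧ J ⊆ L then (-1 : ℝ) ^ (J.card - I.card) else 0) := by
    intro J
    split_ifs with h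
    · obtain ⟨h1, h2⟩ := h
      have hc1 : I.card ≤ J.card := Finset.card_le_card h1
      have hc2 : J.card ≤ L.card := Finset.card_le_card h2
      rw [neg_one_pow_sub_aux hc2, neg_one_pow_sub_aux (hc1.trans hc2),
        neg_one_pow_sub_aux hc1]
      have hsq : ((-1:ℝ) ^ I.card) * ((-1:ℝ) ^ I.card) = 1 := by
        rw [← pow_add, ← two_mul, pow_mul]; norm_num
      calc (-1:ℝ) ^ L.card * (-1) ^ J.card
          = (-1:ℝ) ^ L.card * (-1) ^ J.card * ((-1) ^ I.card * (-1) ^ I.card) := by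
            rw [hsq, mul_one]
        _ = (-1:ℝ) ^ L.card * (-1) ^ I.card * ((-1) ^ J.card * (-1) ^ I.card) := by ring
    · ring
  rw [Finset.sum_congr rfl fun J _ => key J, ← Finset.mul_sum, alt_sum_aux]
  split_ifs with h
  · subst h; simp
  · ring

/-- The Möbius transform of `y`. -/
private noncomputable def moebAux {V : Type*} [DecidableEq V] [Fintype V] (y : Finset V → ℝ)
    (I : Finset V) : ℝ :=
  ∑ L : Finset V, if I ⊆ L then (-1 : ℝ) ^ (L.card - I.card) * y L else 0

private lemma moebAux_inv {V : Type*} [DecidableEq V] [Fintype V] (y : Finset V → ℝ)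
    (J : Finset V) :
    y J = ∑ I : Finset V, moebAux y I * charVec I J := by
  have step : ∀ I : Finset V, moebAux y I * charVec I J =
      ∑ L : Finset V, if J ⊆ I ∧ I ⊆ L then (-1 : ℝ) ^ (L.card - I.card) * y L else 0 := by
    intro I
    unfold moebAux charVec
    rw [mul_comm, Finset.mul_sum]
    refine Finset.sum_congr rfl fun L _ => ?_
    split_ifs with h1 h2 h3 <;> simp_all
  rw [Finset.sum_congr rfl fun I _ => step I, Finset.sum_comm]
  have step2 : ∀ L : Finset V,
      (∑ I : Finset V, if J ⊆ I ∧ I ⊆ L then (-1 : ℝ) ^ (L.card - I.card) * y L else 0) =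
      (if J = L then 1 else 0) * y L := by
    intro L
    rw [← alt_sum_aux' J L, Finset.sum_mul]
    refine Finset.sum_congr rfl fun I _ => ?_
    split_ifs <;> ring
  rw [Finset.sum_congr rfl fun L _ => step2 L]
  simp

private lemma charVec_union_aux {V : Type*} [DecidableEq V] (I J K : Finset V) :
    charVec I (J ∪ K) = charVec I J * charVec I K := by
  unfold charVec
  by_cases h1 : J ⊆ I <;> by_cases h2 : K ⊆ I <;>
    simp [h1, h2, Finset.union_subset_iff]

private lemma factor_aux {V : Type*} [DecidableEq V] [Fintype V] (y α : Finset V → ℝ)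
    (hy : ∀ J, y J = ∑ I : Finset V, α I * charVec I J)
    (x : {J : Finset V // J.card ≤ Fintype.card V} → ℝ) :
    x ⬝ᵥ (momentMatrix (Fintype.card V) y *ᵥ x) =
      ∑ I : Finset V, α I *
        (∑ J : {J : Finset V // J.card ≤ Fintype.card V}, charVec I J.1 * x J) ^ 2 := by
  calc x ⬝ᵥ (momentMatrix (Fintype.card V) y *ᵥ x)
      = ∑ J : {J : Finset V // J.card ≤ Fintype.card V},
          ∑ K : {J : Finset V // J.card ≤ Fintype.card V}, x J * (y (J.1 ∪ K.1) * x K) := by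
        simp [dotProduct, Matrix.mulVec, momentMatrix, Finset.mul_sum]
    _ = ∑ J : {J : Finset V // J.card ≤ Fintype.card V},
          ∑ K : {J : Finset V // J.card ≤ Fintype.card V}, ∑ I : Finset V,
            α I * ((charVec I J.1 * x J) * (charVec I K.1 * x K)) := by
        refine Finset.sum_congr rfl fun J _ => Finset.sum_congr rfl fun K _ => ?_
        rw [hy (J.1 ∪ K.1), Finset.sum_mul, Finset.mul_sum]
        refine Finset.sum_congr rfl fun I _ => ?_
        rw [charVec_union_aux]
        ring
    _ = ∑ I : Finset V, ∑ J : {J : Finset V // J.card ≤ Fintype.card V},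
          ∑ K : {J : Finset V // J.card ≤ Fintype.card V},
            α I * ((charVec I J.1 * x J) * (charVec I K.1 * x K)) := by
        rw [Finset.sum_congr rfl fun (J : {J : Finset V // J.card ≤ Fintype.card V})
          (_ : J ∈ Finset.univ) => (Finset.sum_comm ..)]
        exact Finset.sum_comm
    _ = ∑ I : Finset V, α I *
          (∑ J : {J : Finset V // J.card ≤ Fintype.card V}, charVec I J.1 * x J) ^ 2 := by
        refine Finset.sum_congr rfl fun I _ => ?_
        rw [sq, Finset.sum_mul_sum, Finset.mul_sum]
        exact Finset.sum_congr rfl fun J _ => by rw [Finset.mul_sum]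

end AuxMomentCone

/-- **Cone characterization of full moment matrices**: for a finite set `V` with `n = |V|`
and a vector `y` indexed by the full power set of `V`, the moment matrix `M_n(y)` is positive
semidefinite if and only if `y` is a nonnegative combination of the characteristic vectors
`χ^I`, `I ⊆ V`. -/


theorem momentMatrix_posSemidef_iff_mem_cone {V : Type*} [DecidableEq V] [Fintype V]
    (y : Finset V → ℝ) :
    (momentMatrix (Fintype.card V) y).PosSemidef ↔
    ∃ α : Finset V → ℝ, (∀ I : Finset V, 0 ≤ α I) ∧
      y = fun J => ∑ I : Finset V, α I * charVec I J := by
  constructor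
  · intro h
    refine ⟨moebAux y, ?_, funext fun J => moebAux_inv y J⟩
    intro I
    set x : {J : Finset V // J.card ≤ Fintype.card V} → ℝ :=
      fun J => if I ⊆ J.1 then (-1 : ℝ) ^ (J.1.card - I.card) else 0 with hx
    have h0 := h.dotProduct_mulVec_nonneg x
    rw [show star x = x from funext fun J => star_trivial _] at h0
    rw [factor_aux y (moebAux y) (fun J => moebAux_inv y J) x] at h0
    have hinner : ∀ I' : Finset V,
        (∑ J : {J : Finset V // J.card ≤ Fintype.card V}, charVec I' J.1 * x J) =
          if I = I' then 1 else 0 := by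
      intro I'
      rw [← alt_sum_aux I I']
      refine Fintype.sum_equiv (Equiv.subtypeUnivEquiv fun J => Finset.card_le_univ J)
        _ _ fun J => ?_
      show charVec I' J.1 * x J =
        if I ⊆ J.1 ∧ J.1 ⊆ I' then (-1 : ℝ) ^ (J.1.card - I.card) else 0
      rw [hx]
      unfold charVec
      by_cases h1 : I ⊆ (J : Finset V) <;> by_cases h2 : (J : Finset V) ⊆ I' <;>
        simp_all
    have hsum : (∑ I' : Finset V, moebAux y I' *
        (∑ J : {J : Finset V // J.card ≤ Fintype.card V}, charVec I' J.1 * x J) ^ 2) =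
        moebAux y I := by
      rw [Finset.sum_congr rfl fun I' _ => by rw [hinner I']]
      rw [Finset.sum_congr rfl fun (I' : Finset V) (_ : I' ∈ Finset.univ) =>
        show moebAux y I' * (if I = I' then (1:ℝ) else 0) ^ 2 =
          if I = I' then moebAux y I' else 0 by split_ifs <;> simp]
      simp
    rw [hsum] at h0
    exact h0
  · rintro ⟨α, hα, hy⟩
    refine Matrix.PosSemidef.of_dotProduct_mulVec_nonneg ?_ ?_
    · ext J K
      show star (y (K.1 ∪ J.1)) = y (J.1 ∪ K.1)
      rw [star_trivial, Finset.union_comm]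
    · intro x
      rw [show star x = x from funext fun J => star_trivial _]
      rw [factor_aux y α (fun J => congrFun hy J) x]
      exact Finset.sum_nonneg fun I _ => mul_nonneg (hα I) (sq_nonneg _)
end

section
/- Dimension of the Terwilliger algebra of the binary Hamming scheme: for every n ≥ 1, the complex vector space 𝒜_n of matrices X ∈ ℂ^{𝔽₂ⁿ × 𝔽₂ⁿ} that are invariant under all simultaneous coordinate permutations (X_{σ·x, σ·y} = X_{x,y} for every permutation σ of the n coordinates and all x, y ∈ 𝔽₂ⁿ) has dimension C(n+3, 3); a basis is given by the 0–1 matrices B^t_{i,j}, indexed by the integer triples (i,j,t) with 0 ≤ t ≤ min(i,j) and i + j ≤ n + t, where (B^t_{i,j})_{x,y} = 1 if and only if wt_H(x) = i, wt_H(y) = j, and d_H(x,y) = i + j − 2t. -/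
/-- The Terwilliger algebra `𝒜_n` of the binary Hamming scheme: the space of complex
matrices indexed by `𝔽₂ⁿ × 𝔽₂ⁿ` which are invariant under all simultaneous permutations of
the `n` coordinates. -/
noncomputable def terwilligerAlgebra (n : ℕ) :
    Submodule ℂ (Matrix (Fin n → ZMod 2) (Fin n → ZMod 2) ℂ) where
  carrier := {X | ∀ (σ : Equiv.Perm (Fin n)) (x y : Fin n → ZMod 2),
    X (x ∘ σ) (y ∘ σ) = X x y}
  add_mem' := by
    intro X Y hX hY σ x y
    simp only [Matrix.add_apply, hX σ x y, hY σ x y]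
  zero_mem' := by
    intro σ x y
    simp
  smul_mem' := by
    intro c X hX σ x y
    simp only [Matrix.smul_apply, hX σ x y]

/-- The 0–1 matrix `B^t_{i,j}`: `(B^t_{i,j})_{x,y} = 1` iff `wt_H(x) = i`, `wt_H(y) = j` and
`d_H(x,y) = i + j - 2t`. -/
def terwilligerBasisMatrix (n i j t : ℕ) :
    Matrix (Fin n → ZMod 2) (Fin n → ZMod 2) ℂ :=
  fun x y =>
    if hammingNorm x = i ∧ hammingNorm y = j ∧ hammingDist x y = i + j - 2 * t then 1 else 0

/-- The index set of the triples `(i, j, t)` with `t ≤ i`, `t ≤ j` and `i + j ≤ n + t`. -/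
def TerwilligerIndex (n : ℕ) : Type :=
  {p : ℕ × ℕ × ℕ // p.2.2 ≤ p.1 ∧ p.2.2 ≤ p.2.1 ∧ p.1 + p.2.1 ≤ n + p.2.2}

open Finset

/-- pairs summing to exactly m -/
def B2eq (m : ℕ) : Finset (ℕ × ℕ) := (range (m+1)).image (fun a => (a, m - a))

lemma mem_B2eq {m : ℕ} {p : ℕ × ℕ} : p ∈ B2eq m ↔ p.1 + p.2 = m := by
  simp only [B2eq, mem_image, mem_range]
  constructor
  · rintro ⟨a, ha, rfl⟩; simp; omega
  · intro h; exact ⟨p.1, by omega, by ext <;> simp <;> omega⟩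

lemma card_B2eq (m : ℕ) : (B2eq m).card = m + 1 := by
  rw [B2eq, Finset.card_image_of_injective _ (fun a b h => (Prod.ext_iff.1 h).1), card_range]

def B2le (m : ℕ) : Finset (ℕ × ℕ) :=
  (range (m+1) ×ˢ range (m+1)).filter (fun p => p.1 + p.2 ≤ m)

lemma mem_B2le {m : ℕ} {p : ℕ × ℕ} : p ∈ B2le m ↔ p.1 + p.2 ≤ m := by
  simp only [B2le, mem_filter, mem_product, mem_range]; omega

lemma card_B2le (m : ℕ) : (B2le m).card = (m+2).choose 2 := by
  induction m with
  | zero =>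
    have : B2le 0 = {(0,0)} := by ext p; rw [mem_B2le, Finset.mem_singleton, Prod.ext_iff]; omega
    simp [this]
  | succ m ih =>
    have hun : B2le (m+1) = B2le m ∪ B2eq (m+1) := by
      ext p; simp [mem_B2le, mem_B2eq]; omega
    have hdis : Disjoint (B2le m) (B2eq (m+1)) := by
      rw [Finset.disjoint_left]
      intro p hp hp'
      rw [mem_B2le] at hp; rw [mem_B2eq] at hp'; omega
    rw [hun, Finset.card_union_of_disjoint hdis, ih, card_B2eq]
    have h1 : (m+1+2).choose 2 = (m+2).choose 1 + (m+2).choose 2 := Nat.choose_succ_succ _ _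
    have h2 : (m+2).choose 1 = m+2 := Nat.choose_one_right _
    omega

def B3eq (m : ℕ) : Finset (ℕ × ℕ × ℕ) := (B2le m).image (fun p => (p.1, p.2, m - p.1 - p.2))

lemma mem_B3eq {m : ℕ} {q : ℕ × ℕ × ℕ} : q ∈ B3eq m ↔ q.1 + q.2.1 + q.2.2 = m := by
  simp only [B3eq, mem_image]
  constructor
  · rintro ⟨p, hp, rfl⟩; rw [mem_B2le] at hp; simp; omega
  · intro h; exact ⟨(q.1, q.2.1), mem_B2le.2 (by omega), by ext <;> simp <;> omega⟩

lemma card_B3eq (m : ℕ) : (B3eq m).card = (m+2).choose 2 := by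
  rw [B3eq, Finset.card_image_of_injOn, card_B2le]
  intro p _ p' _ h
  simp only [Prod.ext_iff] at h
  exact Prod.ext h.1 h.2.1

def B3le (m : ℕ) : Finset (ℕ × ℕ × ℕ) :=
  (range (m+1) ×ˢ range (m+1) ×ˢ range (m+1)).filter (fun q => q.1 + q.2.1 + q.2.2 ≤ m)

lemma mem_B3le {m : ℕ} {q : ℕ × ℕ × ℕ} : q ∈ B3le m ↔ q.1 + q.2.1 + q.2.2 ≤ m := by
  simp only [B3le, mem_filter, mem_product, mem_range]; omega

lemma card_B3le (m : ℕ) : (B3le m).card = (m+3).choose 3 := by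
  induction m with
  | zero =>
    have : B3le 0 = {(0,0,0)} := by
      ext ⟨a,b,c⟩; rw [mem_B3le]; simp [Prod.ext_iff]; omega
    simp [this]
  | succ m ih =>
    have hun : B3le (m+1) = B3le m ∪ B3eq (m+1) := by
      ext q; simp [mem_B3le, mem_B3eq]; omega
    have hdis : Disjoint (B3le m) (B3eq (m+1)) := by
      rw [Finset.disjoint_left]
      intro q hq hq'
      rw [mem_B3le] at hq; rw [mem_B3eq] at hq'; omega
    rw [hun, Finset.card_union_of_disjoint hdis, ih, card_B3eq]
    have h1 : (m+1+3).choose 3 = (m+3).choose 2 + (m+3).choose 3 := Nat.choose_succ_succ _ _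
    have h2 : (m+1+2).choose 2 = (m+3).choose 2 := rfl
    omega

/-- the index triples (i,j,t) as a Finset -/
def TIdxFinset (n : ℕ) : Finset (ℕ × ℕ × ℕ) :=
  (B3le n).image (fun q => (q.1 + q.2.2, q.2.1 + q.2.2, q.2.2))

lemma mem_TIdxFinset {n : ℕ} {p : ℕ × ℕ × ℕ} :
    p ∈ TIdxFinset n ↔ p.2.2 ≤ p.1 ∧ p.2.2 ≤ p.2.1 ∧ p.1 + p.2.1 ≤ n + p.2.2 := by
  simp only [TIdxFinset, mem_image]
  constructor
  · rintro ⟨q, hq, rfl⟩; rw [mem_B3le] at hq; simp; omega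
  · rintro ⟨h1, h2, h3⟩
    exact ⟨(p.1 - p.2.2, p.2.1 - p.2.2, p.2.2),
      mem_B3le.2 (by show p.1 - p.2.2 + (p.2.1 - p.2.2) + p.2.2 ≤ n; omega),
      by ext <;> simp <;> omega⟩

lemma card_TIdxFinset (n : ℕ) : (TIdxFinset n).card = (n+3).choose 3 := by
  rw [TIdxFinset, Finset.card_image_of_injOn, card_B3le]
  intro q _ q' _ h
  simp only [Prod.ext_iff] at h
  refine Prod.ext (by omega) (Prod.ext (by omega) (by omega))
open Finset

variable {n : ℕ}

/-- number of coordinates where `x` equals `a` and `y` equals `b` -/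
def pairCnt (x y : Fin n → ZMod 2) (a b : ZMod 2) : ℕ :=
  #{k | x k = a ∧ y k = b}

lemma zmod2_cases (a : ZMod 2) : a = 0 ∨ a = 1 := by revert a; decide

lemma pairCnt_norm_fst (x y : Fin n → ZMod 2) :
    pairCnt x y 1 0 + pairCnt x y 1 1 = hammingNorm x := by
  unfold pairCnt hammingNorm
  rw [card_filter, card_filter, card_filter, ← Finset.sum_add_distrib]
  refine Finset.sum_congr rfl fun k _ => ?_
  have : ∀ a b : ZMod 2,
      ((if a = 1 ∧ b = 0 then 1 else 0) + if a = 1 ∧ b = 1 then 1 else 0)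
        = if a ≠ 0 then 1 else 0 := by decide
  exact this (x k) (y k)

lemma pairCnt_norm_snd (x y : Fin n → ZMod 2) :
    pairCnt x y 0 1 + pairCnt x y 1 1 = hammingNorm y := by
  unfold pairCnt hammingNorm
  rw [card_filter, card_filter, card_filter, ← Finset.sum_add_distrib]
  refine Finset.sum_congr rfl fun k _ => ?_
  have : ∀ a b : ZMod 2,
      ((if a = 0 ∧ b = 1 then 1 else 0) + if a = 1 ∧ b = 1 then 1 else 0)
        = if b ≠ 0 then 1 else 0 := by decide
  exact this (x k) (y k)

lemma pairCnt_dist (x y : Fin n → ZMod 2) :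
    pairCnt x y 1 0 + pairCnt x y 0 1 = hammingDist x y := by
  unfold pairCnt hammingDist
  rw [card_filter, card_filter, card_filter, ← Finset.sum_add_distrib]
  refine Finset.sum_congr rfl fun k _ => ?_
  have : ∀ a b : ZMod 2,
      ((if a = 1 ∧ b = 0 then 1 else 0) + if a = 0 ∧ b = 1 then 1 else 0)
        = if a ≠ b then 1 else 0 := by decide
  exact this (x k) (y k)

lemma pairCnt_total (x y : Fin n → ZMod 2) :
    pairCnt x y 0 0 + pairCnt x y 1 0 + pairCnt x y 0 1 + pairCnt x y 1 1 = n := by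
  unfold pairCnt
  rw [card_filter, card_filter, card_filter, card_filter, ← Finset.sum_add_distrib,
    ← Finset.sum_add_distrib, ← Finset.sum_add_distrib]
  have : ∀ a b : ZMod 2,
      ((if a = 0 ∧ b = 0 then 1 else 0) + (if a = 1 ∧ b = 0 then 1 else 0)
        + (if a = 0 ∧ b = 1 then 1 else 0) + if a = 1 ∧ b = 1 then 1 else 0) = 1 := by decide
  calc (∑ k : Fin n, ((if x k = 0 ∧ y k = 0 then 1 else 0) + (if x k = 1 ∧ y k = 0 then 1 else 0)
        + (if x k = 0 ∧ y k = 1 then 1 else 0) + if x k = 1 ∧ y k = 1 then 1 else 0))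
      = ∑ _k : Fin n, 1 := Finset.sum_congr rfl fun k _ => this (x k) (y k)
    _ = n := by simp

/-- Orbit classification: pairs with the same invariants are related by a permutation. -/
lemma exists_perm_of_invariants (x y x' y' : Fin n → ZMod 2)
    (h1 : hammingNorm x = hammingNorm x') (h2 : hammingNorm y = hammingNorm y')
    (h3 : hammingDist x y = hammingDist x' y') :
    ∃ σ : Equiv.Perm (Fin n), x ∘ σ = x' ∧ y ∘ σ = y' := by
  have hcnt : ∀ a b : ZMod 2, pairCnt x' y' a b = pairCnt x y a b := by
    have e1 := pairCnt_norm_fst x y; have e1' := pairCnt_norm_fst x' y'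
    have e2 := pairCnt_norm_snd x y; have e2' := pairCnt_norm_snd x' y'
    have e3 := pairCnt_dist x y; have e3' := pairCnt_dist x' y'
    have e4 := pairCnt_total x y; have e4' := pairCnt_total x' y'
    intro a b
    rcases zmod2_cases a with rfl | rfl <;> rcases zmod2_cases b with rfl | rfl <;> omega
  have key : ∀ c : ZMod 2 × ZMod 2,
      Fintype.card {k // (fun k => (x' k, y' k)) k = c}
        = Fintype.card {k // (fun k => (x k, y k)) k = c} := by
    intro c
    rw [Fintype.card_subtype, Fintype.card_subtype]
    have h : ∀ (u v : Fin n → ZMod 2),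
        #{k | (u k, v k) = c} = pairCnt u v c.1 c.2 := by
      intro u v
      unfold pairCnt
      refine Finset.card_nbij id (fun k hk => ?_) (fun k hk k' hk' h => h) (fun k hk => ?_)
      · simp only [mem_filter, mem_univ, true_and, Prod.ext_iff] at hk ⊢; exact hk
      · refine ⟨k, ?_, rfl⟩
        simp only [coe_filter, Set.mem_setOf_eq, mem_univ, true_and, Prod.ext_iff] at hk ⊢
        exact hk
    rw [h, h, hcnt]
  let σ : Fin n ≃ Fin n :=
    Equiv.ofFiberEquiv (f := fun k => (x' k, y' k)) (g := fun k => (x k, y k))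
      (fun c => Fintype.equivOfCardEq (key c))
  refine ⟨σ, funext fun k => ?_, funext fun k => ?_⟩
  · have := Equiv.ofFiberEquiv_map (fun c => Fintype.equivOfCardEq (key c)) k
    exact (Prod.ext_iff.1 this).1
  · have := Equiv.ofFiberEquiv_map (fun c => Fintype.equivOfCardEq (key c)) k
    exact (Prod.ext_iff.1 this).2
variable {n : ℕ}

lemma indicator_ne_zero (P : Prop) [Decidable P] :
    ((if P then (1 : ZMod 2) else 0) ≠ 0) ↔ P := by
  split <;> simp_all

lemma indicator_ne_indicator (P Q : Prop) [Decidable P] [Decidable Q] :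
    ((if P then (1 : ZMod 2) else 0) ≠ (if Q then (1 : ZMod 2) else 0)) ↔ ¬(P ↔ Q) := by
  have h10 : (1 : ZMod 2) ≠ 0 := by decide
  split <;> split <;> simp_all

lemma card_filter_fin (n : ℕ) (p : ℕ → Prop) [DecidablePred p] :
    #{k : Fin n | p (k : ℕ)} = #{m ∈ Finset.range n | p m} := by
  refine Finset.card_nbij (fun k => (k : ℕ)) (fun k hk => ?_)
    (fun k hk k' hk' h => Fin.val_injective h) (fun m hm => ?_)
  · simp only [mem_coe, mem_filter, mem_univ, true_and, mem_range] at hk ⊢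
    exact ⟨k.isLt, hk⟩
  · simp only [coe_filter, Set.mem_setOf_eq, mem_univ, true_and, mem_range,
      Set.mem_image] at hm ⊢
    exact ⟨⟨m, hm.1⟩, hm.2, rfl⟩

/-- weight of an indicator vector on `Fin n` -/
lemma hammingNorm_indicator' (p : ℕ → Prop) [DecidablePred p] :
    hammingNorm (fun k : Fin n => if p (k : ℕ) then (1 : ZMod 2) else 0)
      = #{m ∈ Finset.range n | p m} := by
  refine Finset.card_nbij (fun k => (k : ℕ)) (fun k hk => ?_)
    (fun k hk k' hk' h => Fin.val_injective h) (fun m hm => ?_)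
  · simp only [mem_coe, mem_filter, mem_univ, true_and, mem_range] at hk ⊢
    exact ⟨k.isLt, (indicator_ne_zero _).1 hk⟩
  · simp only [coe_filter, Set.mem_setOf_eq, mem_univ, true_and, mem_range,
      Set.mem_image] at hm ⊢
    exact ⟨⟨m, hm.1⟩, (indicator_ne_zero _).2 hm.2, rfl⟩

lemma hammingDist_indicator' (p q : ℕ → Prop) [DecidablePred p] [DecidablePred q] :
    hammingDist (fun k : Fin n => if p (k : ℕ) then (1 : ZMod 2) else 0)
        (fun k : Fin n => if q (k : ℕ) then (1 : ZMod 2) else 0)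
      = #{m ∈ Finset.range n | ¬(p m ↔ q m)} := by
  refine Finset.card_nbij (fun k => (k : ℕ)) (fun k hk => ?_)
    (fun k hk k' hk' h => Fin.val_injective h) (fun m hm => ?_)
  · simp only [mem_coe, mem_filter, mem_univ, true_and, mem_range] at hk ⊢
    exact ⟨k.isLt, (indicator_ne_indicator _ _).1 hk⟩
  · simp only [coe_filter, Set.mem_setOf_eq, mem_univ, true_and, mem_range,
      Set.mem_image] at hm ⊢
    exact ⟨⟨m, hm.1⟩, (indicator_ne_indicator _ _).2 hm.2, rfl⟩

/-- first representative: indicator of the first `i` coordinates -/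
def repFst (n i : ℕ) : Fin n → ZMod 2 := fun k => if (k : ℕ) < i then 1 else 0

/-- second representative: indicator of the interval `[i-t, i-t+j)` -/
def repSnd (n i j t : ℕ) : Fin n → ZMod 2 :=
  fun k => if i - t ≤ (k : ℕ) ∧ (k : ℕ) < i - t + j then 1 else 0

lemma norm_repFst (i : ℕ) (h : i ≤ n) : hammingNorm (repFst n i) = i := by
  have h1 : hammingNorm (repFst n i) = #{m ∈ Finset.range n | m < i} :=
    hammingNorm_indicator' (fun m => m < i)
  rw [h1]
  calc #{m ∈ Finset.range n | m < i} = (Finset.range i).card := by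
        congr 1; ext m; simp only [mem_filter, mem_range]; omega
    _ = i := card_range i

lemma norm_repSnd (i j t : ℕ) (h : i - t + j ≤ n) : hammingNorm (repSnd n i j t) = j := by
  have h1 : hammingNorm (repSnd n i j t) = #{m ∈ Finset.range n | i - t ≤ m ∧ m < i - t + j} :=
    hammingNorm_indicator' (fun m => i - t ≤ m ∧ m < i - t + j)
  rw [h1]
  calc #{m ∈ Finset.range n | i - t ≤ m ∧ m < i - t + j}
      = (Finset.Ico (i - t) (i - t + j)).card := by
        congr 1; ext m; simp only [mem_filter, mem_range, mem_Ico]; omega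
    _ = j := by rw [Nat.card_Ico]; omega

lemma dist_rep (i j t : ℕ) (ht1 : t ≤ i) (ht2 : t ≤ j) (h : i + j ≤ n + t) :
    hammingDist (repFst n i) (repSnd n i j t) = i + j - 2 * t := by
  have h1 : hammingDist (repFst n i) (repSnd n i j t)
      = #{m ∈ Finset.range n | ¬(m < i ↔ (i - t ≤ m ∧ m < i - t + j))} :=
    hammingDist_indicator' (fun m => m < i) (fun m => i - t ≤ m ∧ m < i - t + j)
  rw [h1]
  calc #{m ∈ Finset.range n | ¬(m < i ↔ (i - t ≤ m ∧ m < i - t + j))}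
      = (Finset.range (i - t) ∪ Finset.Ico i (i - t + j)).card := by
        congr 1; ext m
        simp only [mem_filter, mem_range, mem_Ico, mem_union]
        omega
    _ = i + j - 2 * t := by
        rw [Finset.card_union_of_disjoint, card_range, Nat.card_Ico]
        · omega
        · rw [Finset.disjoint_left]; intro m hm hm'
          simp only [mem_range, mem_Ico] at hm hm'; omega
lemma mem_terwilligerAlgebra_iff {n : ℕ} {X : Matrix (Fin n → ZMod 2) (Fin n → ZMod 2) ℂ} :
    X ∈ terwilligerAlgebra n ↔ ∀ (σ : Equiv.Perm (Fin n)) (x y : Fin n → ZMod 2),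
      X (x ∘ σ) (y ∘ σ) = X x y := Iff.rfl

lemma hammingNorm_comp_perm {n : ℕ} (x : Fin n → ZMod 2) (σ : Equiv.Perm (Fin n)) :
    hammingNorm (x ∘ σ) = hammingNorm x := by
  refine Finset.card_nbij (fun k => σ k) (fun k hk => ?_)
    (fun k _ k' _ h => σ.injective h) (fun k hk => ?_)
  · simp only [mem_coe, mem_filter, mem_univ, true_and, Function.comp_apply] at hk ⊢
    exact hk
  · simp only [coe_filter, Set.mem_setOf_eq, mem_univ, true_and, Set.mem_image,
      Function.comp_apply] at hk ⊢
    exact ⟨σ.symm k, by simpa using hk, by simp⟩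

lemma hammingDist_comp_perm {n : ℕ} (x y : Fin n → ZMod 2) (σ : Equiv.Perm (Fin n)) :
    hammingDist (x ∘ σ) (y ∘ σ) = hammingDist x y := by
  refine Finset.card_nbij (fun k => σ k) (fun k hk => ?_)
    (fun k _ k' _ h => σ.injective h) (fun k hk => ?_)
  · simp only [mem_coe, mem_filter, mem_univ, true_and, Function.comp_apply] at hk ⊢
    exact hk
  · simp only [coe_filter, Set.mem_setOf_eq, mem_univ, true_and, Set.mem_image,
      Function.comp_apply] at hk ⊢
    exact ⟨σ.symm k, by simpa using hk, by simp⟩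

instance terwilligerIndexFintype (n : ℕ) : Fintype (TerwilligerIndex n) :=
  Fintype.subtype (TIdxFinset n) (fun _ => mem_TIdxFinset)

lemma card_terwilligerIndex (n : ℕ) :
    Fintype.card (TerwilligerIndex n) = (n + 3).choose 3 :=
  (Fintype.subtype_card _ _).trans (card_TIdxFinset n)

/-- existence of the intersection parameter `t` for any pair -/
lemma exists_t {n : ℕ} (x y : Fin n → ZMod 2) :
    ∃ t, t ≤ hammingNorm x ∧ t ≤ hammingNorm y ∧
      hammingNorm x + hammingNorm y ≤ n + t ∧
      hammingDist x y = hammingNorm x + hammingNorm y - 2 * t := by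
  refine ⟨pairCnt x y 1 1, ?_⟩
  have e1 := pairCnt_norm_fst x y
  have e2 := pairCnt_norm_snd x y
  have e3 := pairCnt_dist x y
  have e4 := pairCnt_total x y
  omega

/-- **Dimension and basis of the Terwilliger algebra of the binary Hamming scheme**: for
every `n ≥ 1`, the algebra `𝒜_n` has dimension `C(n+3, 3)`, and the matrices `B^t_{i,j}`
indexed by the triples `(i,j,t)` with `0 ≤ t ≤ min(i,j)` and `i + j ≤ n + t` form a basis:
they lie in `𝒜_n`, are linearly independent, and span `𝒜_n`. -/
theorem terwilligerAlgebra_finrank_and_basis (n : ℕ) (hn : 1 ≤ n) :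
    Module.finrank ℂ (terwilligerAlgebra n) = (n + 3).choose 3 ∧
    (∀ p : TerwilligerIndex n,
      terwilligerBasisMatrix n p.1.1 p.1.2.1 p.1.2.2 ∈ terwilligerAlgebra n) ∧
    LinearIndependent ℂ
      (fun p : TerwilligerIndex n => terwilligerBasisMatrix n p.1.1 p.1.2.1 p.1.2.2) ∧
    Submodule.span ℂ
      (Set.range fun p : TerwilligerIndex n =>
        terwilligerBasisMatrix n p.1.1 p.1.2.1 p.1.2.2) = terwilligerAlgebra n := by
  -- membership
  have hmem : ∀ p : TerwilligerIndex n,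
      terwilligerBasisMatrix n p.1.1 p.1.2.1 p.1.2.2 ∈ terwilligerAlgebra n := by
    intro p
    rw [mem_terwilligerAlgebra_iff]
    intro σ x y
    show (if hammingNorm (x ∘ σ) = p.1.1 ∧ hammingNorm (y ∘ σ) = p.1.2.1 ∧
        hammingDist (x ∘ σ) (y ∘ σ) = p.1.1 + p.1.2.1 - 2 * p.1.2.2 then (1:ℂ) else 0) = _
    rw [hammingNorm_comp_perm, hammingNorm_comp_perm, hammingDist_comp_perm]
    rfl
  -- bounds from the index conditions
  have hbd : ∀ p : TerwilligerIndex n, p.1.1 ≤ n ∧ p.1.1 - p.1.2.2 + p.1.2.1 ≤ n := by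
    rintro ⟨⟨i, j, t⟩, h1, h2, h3⟩
    dsimp only at h1 h2 h3 ⊢
    omega
  -- evaluation of basis matrices at representatives
  have heval_self : ∀ p : TerwilligerIndex n,
      terwilligerBasisMatrix n p.1.1 p.1.2.1 p.1.2.2
        (repFst n p.1.1) (repSnd n p.1.1 p.1.2.1 p.1.2.2) = 1 := by
    intro p
    show (if hammingNorm (repFst n p.1.1) = p.1.1 ∧
        hammingNorm (repSnd n p.1.1 p.1.2.1 p.1.2.2) = p.1.2.1 ∧
        hammingDist (repFst n p.1.1) (repSnd n p.1.1 p.1.2.1 p.1.2.2)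
          = p.1.1 + p.1.2.1 - 2 * p.1.2.2 then (1:ℂ) else 0) = 1
    rw [if_pos]
    exact ⟨norm_repFst _ (hbd p).1, norm_repSnd _ _ _ (hbd p).2,
      dist_rep _ _ _ p.2.1 p.2.2.1 p.2.2.2⟩
  have heval_ne : ∀ p q : TerwilligerIndex n, q ≠ p →
      terwilligerBasisMatrix n q.1.1 q.1.2.1 q.1.2.2
        (repFst n p.1.1) (repSnd n p.1.1 p.1.2.1 p.1.2.2) = 0 := by
    intro p q hne
    show (if hammingNorm (repFst n p.1.1) = q.1.1 ∧
        hammingNorm (repSnd n p.1.1 p.1.2.1 p.1.2.2) = q.1.2.1 ∧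
        hammingDist (repFst n p.1.1) (repSnd n p.1.1 p.1.2.1 p.1.2.2)
          = q.1.1 + q.1.2.1 - 2 * q.1.2.2 then (1:ℂ) else 0) = 0
    rw [if_neg]
    rintro ⟨e1, e2, e3⟩
    rw [norm_repFst _ (hbd p).1] at e1
    rw [norm_repSnd _ _ _ (hbd p).2] at e2
    rw [dist_rep _ _ _ p.2.1 p.2.2.1 p.2.2.2] at e3
    apply hne
    obtain ⟨⟨i, j, t⟩, h1, h2, h3⟩ := p
    obtain ⟨⟨i', j', t'⟩, h1', h2', h3'⟩ := q
    simp only at e1 e2 e3 h1 h2 h3 h1' h2' h3'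
    have : i = i' ∧ j = j' ∧ t = t' := by omega
    exact Subtype.ext (by simp [this.1, this.2.1, this.2.2])
  -- linear independence
  have hind : LinearIndependent ℂ
      (fun p : TerwilligerIndex n => terwilligerBasisMatrix n p.1.1 p.1.2.1 p.1.2.2) := by
    rw [linearIndependent_iff']
    intro s g hsum p hp
    have h0 := congrFun (congrFun hsum (repFst n p.1.1)) (repSnd n p.1.1 p.1.2.1 p.1.2.2)
    rw [Matrix.sum_apply] at h0
    simp only [Matrix.smul_apply, Matrix.zero_apply] at h0
    rw [Finset.sum_eq_single_of_mem p hp (fun q _ hq => by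
      rw [heval_ne p q hq, smul_zero])] at h0
    rw [heval_self p, smul_eq_mul, mul_one] at h0
    exact h0
  -- span
  have hspan : Submodule.span ℂ
      (Set.range fun p : TerwilligerIndex n =>
        terwilligerBasisMatrix n p.1.1 p.1.2.1 p.1.2.2) = terwilligerAlgebra n := by
    apply le_antisymm
    · rw [Submodule.span_le]
      rintro _ ⟨p, rfl⟩
      exact hmem p
    · intro X hX
      have hXinv : ∀ (σ : Equiv.Perm (Fin n)) (x y : Fin n → ZMod 2),
          X (x ∘ σ) (y ∘ σ) = X x y := hX
      have hrepr : X = ∑ p : TerwilligerIndex n,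
          (X (repFst n p.1.1) (repSnd n p.1.1 p.1.2.1 p.1.2.2)) •
            terwilligerBasisMatrix n p.1.1 p.1.2.1 p.1.2.2 := by
        ext x y
        rw [Matrix.sum_apply]
        obtain ⟨t0, ht1, ht2, ht3, ht4⟩ := exists_t x y
        set p0 : TerwilligerIndex n := ⟨(hammingNorm x, hammingNorm y, t0), ht1, ht2, ht3⟩
          with hp0
        rw [Finset.sum_eq_single_of_mem p0 (Finset.mem_univ _) (fun q _ hq => ?_)]
        · rw [Matrix.smul_apply]
          have hB : terwilligerBasisMatrix n p0.1.1 p0.1.2.1 p0.1.2.2 x y = 1 := by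
            show (if hammingNorm x = p0.1.1 ∧ hammingNorm y = p0.1.2.1 ∧
              hammingDist x y = p0.1.1 + p0.1.2.1 - 2 * p0.1.2.2 then (1:ℂ) else 0) = 1
            rw [if_pos]
            exact ⟨rfl, rfl, ht4⟩
          rw [hB, smul_eq_mul, mul_one]
          -- X x y = X at representatives
          have h1 : hammingNorm (repFst n p0.1.1) = hammingNorm x :=
            norm_repFst _ (hbd p0).1
          have h2 : hammingNorm (repSnd n p0.1.1 p0.1.2.1 p0.1.2.2) = hammingNorm y :=
            norm_repSnd _ _ _ (hbd p0).2
          have h3 : hammingDist (repFst n p0.1.1) (repSnd n p0.1.1 p0.1.2.1 p0.1.2.2)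
              = hammingDist x y := by
            rw [dist_rep _ _ _ p0.2.1 p0.2.2.1 p0.2.2.2, ht4]
          obtain ⟨σ, hσ1, hσ2⟩ := exists_perm_of_invariants _ _ x y h1 h2 h3
          rw [← hσ1, ← hσ2, hXinv σ]
        · rw [Matrix.smul_apply]
          have hB : terwilligerBasisMatrix n q.1.1 q.1.2.1 q.1.2.2 x y = 0 := by
            show (if hammingNorm x = q.1.1 ∧ hammingNorm y = q.1.2.1 ∧
              hammingDist x y = q.1.1 + q.1.2.1 - 2 * q.1.2.2 then (1:ℂ) else 0) = 0
            rw [if_neg]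
            rintro ⟨e1, e2, e3⟩
            apply hq
            obtain ⟨⟨i, j, t⟩, hq1, hq2, hq3⟩ := q
            simp only at e1 e2 e3 hq1 hq2 hq3
            subst e1; subst e2
            have : t = t0 := by omega
            exact Subtype.ext (by simp [hp0, this])
          rw [hB, smul_zero]
      rw [hrepr]
      exact Submodule.sum_mem _ (fun p _ => Submodule.smul_mem _ _
        (Submodule.subset_span ⟨p, rfl⟩))
  refine ⟨?_, hmem, hind, hspan⟩
  rw [← hspan]
  exact (finrank_span_eq_card hind).trans (card_terwilligerIndex n)
end
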